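/- Let u : ℝ^3 × [0,T] → ℝ^3 be continuous in time and log-Lipschitz in space uniformly in time: there is L > 0 such that |u(x,t) − u(y,t)| ≤ L |x−y| (1 + |log|x−y||) whenever 0 < |x−y| ≤ 1. Then for each y ∈ ℝ^3 the ODE ẋ(t) = u(x(t),t), x(0) = y has a unique solution on [0,T], and the flow map y ↦ x(t,y) is Hölder continuous: there exist constants C > 0 and, for each t ∈ [0,T], an exponent α(t) = e^{−Lt} ∈ (0,1], such that |x(t,y) − x(t,z)| ≤ C |y−z|^{α(t)} for |y−z| ≤ 1. -/

import Mathlib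

open Set MeasureTheory intervalIntegral Filter

namespace Stmt16

noncomputable def om (K r : ℝ) : ℝ := K * r * (1 - Real.log r)

lemma om_zero (K : ℝ) : om K 0 = 0 := by simp [om]

lemma om_nonneg {K r : ℝ} (hK : 0 ≤ K) (h0 : 0 ≤ r) (h1 : r ≤ 1) : 0 ≤ om K r := by
  have : Real.log r ≤ 0 := Real.log_nonpos h0 h1
  have h2 : 0 ≤ 1 - Real.log r := by linarith
  exact mul_nonneg (mul_nonneg hK h0) h2

lemma om_mono {K r r' : ℝ} (hK : 0 ≤ K) (h0 : 0 ≤ r) (hrr : r ≤ r') (h1 : r' ≤ 1) :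
    om K r ≤ om K r' := by
  rcases eq_or_lt_of_le h0 with h | h
  · rw [← h, om_zero]
    exact om_nonneg hK (le_trans h0 hrr) h1
  · have hr' : 0 < r' := lt_of_lt_of_le h hrr
    have hlog : Real.log r' - Real.log r ≤ r' / r - 1 := by
      have := Real.log_le_sub_one_of_pos (x := r' / r) (by positivity)
      rwa [Real.log_div hr'.ne' h.ne'] at this
    have hlog2 : r * Real.log r' - r * Real.log r ≤ r' - r := by
      have := mul_le_mul_of_nonneg_left hlog h0
      have hrne : r ≠ 0 := h.ne'
      field_simp at this
      nlinarith
    have hlogr' : Real.log r' ≤ 0 := Real.log_nonpos hr'.le h1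
    have key : r * (1 - Real.log r) ≤ r' * (1 - Real.log r') := by
      nlinarith [mul_nonneg (sub_nonneg.2 hrr) (neg_nonneg.2 hlogr')]
    have := mul_le_mul_of_nonneg_left key hK
    unfold om; nlinarith
lemma om_le {K r : ℝ} (hK : 0 ≤ K) (h0 : 0 ≤ r) (h1 : r ≤ 1) : om K r ≤ 2 * K := by
  rcases eq_or_lt_of_le h0 with h | h
  · rw [← h, om_zero]; positivity
  · have h2 : Real.log (1 / r) ≤ 1 / r - 1 := Real.log_le_sub_one_of_pos (by positivity)
    rw [Real.log_div one_ne_zero h.ne', Real.log_one] at h2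
    have : r * (- Real.log r) ≤ 1 - r := by
      have := mul_le_mul_of_nonneg_left h2 h0
      calc r * (-Real.log r) = r * (0 - Real.log r) := by ring
      _ ≤ r * (1/r - 1) := by nlinarith
      _ = 1 - r := by field_simp
    have key : r * (1 - Real.log r) ≤ 2 := by nlinarith
    unfold om; nlinarith

lemma om_le_sqrt {K r : ℝ} (hK : 0 ≤ K) (h0 : 0 ≤ r) (h1 : r ≤ 1) :
    om K r ≤ K * (r + 2 * Real.sqrt r) := by
  rcases eq_or_lt_of_le h0 with h | h
  · rw [← h, om_zero]; simp
  · have hs : 0 < Real.sqrt r := Real.sqrt_pos.2 h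
    have h2 : Real.log (1 / Real.sqrt r) ≤ 1 / Real.sqrt r - 1 :=
      Real.log_le_sub_one_of_pos (by positivity)
    rw [Real.log_div one_ne_zero hs.ne', Real.log_one] at h2
    have hlogr : Real.log r = 2 * Real.log (Real.sqrt r) := by
      rw [Real.log_sqrt h0]; ring
    have hrs : r / Real.sqrt r = Real.sqrt r := Real.div_sqrt
    have : r * (- Real.log r) ≤ 2 * Real.sqrt r := by
      have h3 : - Real.log r ≤ 2 * (1 / Real.sqrt r) := by rw [hlogr]; linarith
      have := mul_le_mul_of_nonneg_left h3 h0
      calc r * (-Real.log r) ≤ r * (2 * (1 / Real.sqrt r)) := this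
      _ = 2 * (r / Real.sqrt r) := by ring
      _ = 2 * Real.sqrt r := by rw [hrs]
    unfold om; nlinarith

lemma om_tendsto {K b : ℝ} {r : ℕ → ℝ} (hK : 0 ≤ K) (h0 : ∀ n, 0 ≤ r n)
    (h1 : ∀ n, r n ≤ 1) (hb : Tendsto r atTop (nhds b)) :
    Tendsto (fun n => om K (r n)) atTop (nhds (om K b)) := by
  have hb0 : 0 ≤ b := le_of_tendsto_of_tendsto' tendsto_const_nhds hb h0
  rcases eq_or_lt_of_le hb0 with h | h
  · subst h
    rw [om_zero]
    apply squeeze_zero (fun n => om_nonneg hK (h0 n) (h1 n))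
      (fun n => om_le_sqrt hK (h0 n) (h1 n))
    have hsq : Tendsto (fun n => Real.sqrt (r n)) atTop (nhds (Real.sqrt 0)) :=
      (Real.continuous_sqrt.tendsto 0).comp hb
    have : Tendsto (fun n => K * (r n + 2 * Real.sqrt (r n))) atTop
        (nhds (K * (0 + 2 * Real.sqrt 0))) := (tendsto_const_nhds.mul (hb.add
          (tendsto_const_nhds.mul hsq)))
    simpa using this
  · have hc : ContinuousAt (fun x => om K x) b := by
      unfold om
      exact (continuousAt_const.mul continuousAt_id).mul
        (continuousAt_const.sub (Real.continuousAt_log h.ne'))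
    exact (hc.tendsto).comp hb

lemma intInt_of_bdd {f : ℝ → ℝ} {a b M : ℝ} (hab : a ≤ b)
    (hm : AEStronglyMeasurable f (volume.restrict (Set.Ioc a b)))
    (hbd : ∀ s ∈ Set.Ioc a b, |f s| ≤ M) : IntervalIntegrable f volume a b := by
  rw [intervalIntegrable_iff, uIoc_of_le hab]
  haveI : IsFiniteMeasure (volume.restrict (Set.Ioc a b)) :=
    ⟨by rw [Measure.restrict_apply_univ]; exact measure_Ioc_lt_top⟩
  refine ⟨hm, MeasureTheory.HasFiniteIntegral.of_bounded (C := M) ?_⟩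
  exact ((ae_restrict_iff' measurableSet_Ioc).2 (ae_of_all _ fun s hs => by
      simpa [Real.norm_eq_abs] using hbd s hs))


lemma osgood {K a c η : ℝ} {f : ℝ → ℝ} (hK : 0 < K) (hη : 0 < η) (hac : a ≤ c)
    (hf : ContinuousOn f (Set.Icc a c))
    (hf0 : ∀ t ∈ Set.Icc a c, 0 ≤ f t)
    (hfa : f a ≤ η)
    (hsmall : Real.log (2*η) ≤ 1 - Real.exp (K*(c-a)))
    (hineq : ∀ t ∈ Set.Icc a c, (∀ s ∈ Set.Icc a t, f s ≤ 1) →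
      f t ≤ η + ∫ s in a..t, K * f s * (1 - Real.log (f s))) :
    ∀ t ∈ Set.Icc a c, f t ≤ Real.exp 1 * (2*η) ^ Real.exp (-K*(t-a)) := by
  have h2η : 0 < 2*η := by linarith
  set ψ : ℝ → ℝ := fun t => Real.exp (1 - (1 - Real.log (2*η)) * Real.exp (-K*(t-a))) with hψdef
  have hψpos : ∀ t, 0 < ψ t := fun t => Real.exp_pos _
  have hψa : ψ a = 2*η := by
    simp only [hψdef]
    rw [show -K*(a-a) = 0 by ring, Real.exp_zero,
      show 1 - (1 - Real.log (2*η)) * 1 = Real.log (2*η) by ring, Real.exp_log h2η]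
  have hlogψ : ∀ t, Real.log (ψ t) = 1 - (1 - Real.log (2*η)) * Real.exp (-K*(t-a)) :=
    fun t => Real.log_exp _
  have hψ1 : ∀ t ∈ Set.Icc a c, ψ t ≤ 1 := by
    intro t ht
    have h1 : Real.exp (K*(c-a)) ≤ 1 - Real.log (2*η) := by linarith
    have h2 : Real.exp (K*(t-a)) ≤ Real.exp (K*(c-a)) :=
      Real.exp_le_exp.2 (mul_le_mul_of_nonneg_left (sub_le_sub_right ht.2 a) hK.le)
    have h3 : Real.exp (K*(t-a)) * Real.exp (-K*(t-a)) = 1 := by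
      rw [← Real.exp_add, show K*(t-a) + -K*(t-a) = 0 by ring, Real.exp_zero]
    have h4 : 1 ≤ (1 - Real.log (2*η)) * Real.exp (-K*(t-a)) := by
      calc (1:ℝ) = Real.exp (K*(t-a)) * Real.exp (-K*(t-a)) := h3.symm
      _ ≤ (1 - Real.log (2*η)) * Real.exp (-K*(t-a)) :=
        mul_le_mul_of_nonneg_right (le_trans h2 h1) (Real.exp_pos _).le
    show Real.exp _ ≤ 1
    exact Real.exp_le_one_iff.2 (by linarith)
  have hψc : Continuous ψ := by
    apply Real.continuous_exp.comp
    apply continuous_const.sub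
    exact continuous_const.mul
      (Real.continuous_exp.comp (continuous_const.mul (continuous_id.sub continuous_const)))
  have hψd : ∀ t, HasDerivAt ψ (K * (ψ t) * (1 - Real.log (ψ t))) t := by
    intro t
    have h1 : HasDerivAt (fun t : ℝ => -K*(t-a)) (-K) t := by
      simpa using ((hasDerivAt_id t).sub_const a).const_mul (-K)
    have h2 : HasDerivAt (fun t : ℝ => Real.exp (-K*(t-a)))
        (Real.exp (-K*(t-a)) * (-K)) t := h1.exp
    have h3 : HasDerivAt (fun t : ℝ => 1 - (1 - Real.log (2*η)) * Real.exp (-K*(t-a)))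
        (-((1 - Real.log (2*η)) * (Real.exp (-K*(t-a)) * (-K)))) t :=
      (h2.const_mul _).const_sub 1
    have h4 := h3.exp
    convert h4 using 1
    rw [hlogψ t]
    ring
  have main : ∀ t ∈ Set.Icc a c, f t ≤ ψ t := by
    by_contra hcon
    push_neg at hcon
    obtain ⟨t₀, ht₀, ht₀'⟩ := hcon
    set S : Set ℝ := Set.Icc a c ∩ (fun t => f t - ψ t) ⁻¹' Set.Ici 0 with hS
    have hScl : IsClosed S :=
      (hf.sub hψc.continuousOn).preimage_isClosed_of_isClosed isClosed_Icc isClosed_Ici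
    have hSne : S.Nonempty := ⟨t₀, ht₀, by simp only [Set.mem_preimage, Set.mem_Ici]; linarith⟩
    have hSbd : BddBelow S := ⟨a, fun s hs => hs.1.1⟩
    set t₁ := sInf S with ht₁def
    have ht₁S : t₁ ∈ S := hScl.csInf_mem hSne hSbd
    have ht₁Icc : t₁ ∈ Set.Icc a c := ht₁S.1
    have ht₁ψ : ψ t₁ ≤ f t₁ := by
      have := ht₁S.2
      simp only [Set.mem_preimage, Set.mem_Ici] at this
      linarith
    have hfa' : f a < ψ a := by rw [hψa]; linarith
    have hat₁ : a < t₁ := by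
      rcases lt_or_eq_of_le ht₁Icc.1 with h | h
      · exact h
      · exfalso; rw [← h] at ht₁ψ; linarith
    have hless : ∀ s, a ≤ s → s < t₁ → f s < ψ s := by
      intro s hs hs'
      by_contra hcs
      push_neg at hcs
      have : s ∈ S := ⟨⟨hs, le_trans hs'.le ht₁Icc.2⟩,
        by simp only [Set.mem_preimage, Set.mem_Ici]; linarith⟩
      exact absurd (csInf_le hSbd this) (not_le.2 hs')
    have hsub : Set.Ico a t₁ ⊆ Set.Icc a c :=
      fun s hs => ⟨hs.1, le_trans hs.2.le ht₁Icc.2⟩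
    have hle : f t₁ ≤ ψ t₁ := by
      have hclos : t₁ ∈ closure (Set.Ico a t₁) := by
        rw [closure_Ico hat₁.ne]
        exact Set.right_mem_Icc.2 hat₁.le
      have hne := mem_closure_iff_nhdsWithin_neBot.1 hclos
      have tendf : Tendsto f (nhdsWithin t₁ (Set.Ico a t₁)) (nhds (f t₁)) :=
        (hf.continuousWithinAt ht₁Icc).mono_left (nhdsWithin_mono _ hsub)
      have tendψ : Tendsto ψ (nhdsWithin t₁ (Set.Ico a t₁)) (nhds (ψ t₁)) :=
        (hψc.tendsto t₁).mono_left nhdsWithin_le_nhds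
      refine le_of_tendsto_of_tendsto tendf tendψ ?_
      filter_upwards [eventually_mem_nhdsWithin] with s hs
      exact (hless s hs.1 hs.2).le
    have heq : f t₁ = ψ t₁ := le_antisymm hle ht₁ψ
    have hcond : ∀ s ∈ Set.Icc a t₁, f s ≤ 1 := by
      intro s hs
      rcases lt_or_eq_of_le hs.2 with h | h
      · exact le_trans (hless s hs.1 h).le (hψ1 s ⟨hs.1, le_trans h.le ht₁Icc.2⟩)
      · rw [h, heq]; exact hψ1 t₁ ht₁Icc
    have hIccsub : Set.Icc a t₁ ⊆ Set.Icc a c := fun s hs => ⟨hs.1, le_trans hs.2 ht₁Icc.2⟩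
    have hfle : ∀ s ∈ Set.Icc a t₁, f s ≤ ψ s := by
      intro s hs
      rcases lt_or_eq_of_le hs.2 with h | h
      · exact (hless s hs.1 h).le
      · rw [h, heq]
    have hfm : AEMeasurable f (volume.restrict (Set.Ioc a t₁)) := by
      have h1 : AEMeasurable f (volume.restrict (Set.Icc a t₁)) :=
        (hf.mono hIccsub).aemeasurable measurableSet_Icc
      exact h1.mono_measure (Measure.restrict_mono Set.Ioc_subset_Icc_self le_rfl)
    have hint1 : IntervalIntegrable (fun s => K * f s * (1 - Real.log (f s))) volume a t₁ := by
      apply intInt_of_bdd hat₁.le (M := 2*K)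
      · exact ((aemeasurable_const.mul hfm).mul
          (aemeasurable_const.sub (Real.measurable_log.comp_aemeasurable hfm))).aestronglyMeasurable
      · intro s hs
        have hs' : s ∈ Set.Icc a t₁ := Set.Ioc_subset_Icc_self hs
        have h0 := hf0 s (hIccsub hs')
        have h1 := hcond s hs'
        have e1 := om_nonneg hK.le h0 h1
        have e2 := om_le hK.le h0 h1
        simp only [om] at e1 e2
        rw [abs_of_nonneg e1]
        exact e2
    have hψ'c : Continuous (fun s => K * ψ s * (1 - Real.log (ψ s))) := by
      have : (fun s => K * ψ s * (1 - Real.log (ψ s)))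
          = fun s => K * ψ s * ((1 - Real.log (2*η)) * Real.exp (-K*(s-a))) := by
        funext s
        rw [hlogψ s]
        ring
      rw [this]
      exact (continuous_const.mul hψc).mul
        (continuous_const.mul
          (Real.continuous_exp.comp (continuous_const.mul (continuous_id.sub continuous_const))))
    have hint2 : IntervalIntegrable (fun s => K * ψ s * (1 - Real.log (ψ s))) volume a t₁ :=
      hψ'c.intervalIntegrable a t₁
    have hmono : (∫ s in a..t₁, K * f s * (1 - Real.log (f s)))
        ≤ ∫ s in a..t₁, K * ψ s * (1 - Real.log (ψ s)) := by
      apply intervalIntegral.integral_mono_on hat₁.le hint1 hint2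
      intro s hs
      exact om_mono hK.le (hf0 s (hIccsub hs)) (hfle s hs) (hψ1 s (hIccsub hs))
    have hFTC : (∫ s in a..t₁, K * ψ s * (1 - Real.log (ψ s))) = ψ t₁ - ψ a :=
      intervalIntegral.integral_eq_sub_of_hasDerivAt (fun s _ => hψd s) hint2
    have happ := hineq t₁ ht₁Icc hcond
    rw [hFTC] at hmono
    rw [hψa] at hmono
    have : f t₁ ≤ ψ t₁ - η := by linarith
    rw [heq] at this
    linarith
  intro t ht
  refine le_trans (main t ht) ?_
  set w := Real.exp (-K*(t-a)) with hw
  have hψeq : ψ t = Real.exp (1 - w) * (2*η) ^ w := by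
    rw [Real.rpow_def_of_pos h2η, ← Real.exp_add]
    simp only [hψdef]
    congr 1
    ring
  rw [hψeq]
  apply mul_le_mul_of_nonneg_right _ (Real.rpow_nonneg h2η.le _)
  exact Real.exp_le_exp.2 (by nlinarith [Real.exp_pos (-K*(t-a))])


lemma osgood_zero {K a c : ℝ} {f : ℝ → ℝ} (hK : 0 < K) (hac : a ≤ c)
    (hf : ContinuousOn f (Set.Icc a c))
    (hf0 : ∀ t ∈ Set.Icc a c, 0 ≤ f t)
    (hfa : f a = 0)
    (hineq : ∀ t ∈ Set.Icc a c, (∀ s ∈ Set.Icc a t, f s ≤ 1) →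
      f t ≤ ∫ s in a..t, K * f s * (1 - Real.log (f s))) :
    ∀ t ∈ Set.Icc a c, f t = 0 := by
  intro t ht
  set η₀ := Real.exp (1 - Real.exp (K*(c-a))) / 2 with hη₀
  have hη₀pos : 0 < η₀ := by positivity
  have key : ∀ n : ℕ, f t ≤ Real.exp 1 * (2*(η₀/(n+1))) ^ Real.exp (-K*(t-a)) := by
    intro n
    have hn1 : (0:ℝ) < n + 1 := by positivity
    have hpos : (0:ℝ) < η₀/(n+1) := by positivity
    refine osgood hK hpos hac hf hf0 (by rw [hfa]; exact hpos.le) ?_ ?_ t ht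
    · have h1 : 2*(η₀/(n+1)) ≤ 2*η₀ := by
        rw [mul_le_mul_iff_right₀ (by norm_num : (0:ℝ) < 2), div_le_iff₀ hn1]
        nlinarith
      have h2 : Real.log (2*η₀) = 1 - Real.exp (K*(c-a)) := by
        rw [hη₀, show (2:ℝ)*(Real.exp (1 - Real.exp (K*(c-a)))/2)
          = Real.exp (1 - Real.exp (K*(c-a))) by ring, Real.log_exp]
      calc Real.log (2*(η₀/(n+1))) ≤ Real.log (2*η₀) :=
        Real.log_le_log (by positivity) h1
      _ = 1 - Real.exp (K*(c-a)) := h2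
    · intro s hs hc
      linarith [hineq s hs hc]
  have hw : 0 < Real.exp (-K*(t-a)) := Real.exp_pos _
  have htend : Tendsto (fun n : ℕ => Real.exp 1 * (2*(η₀/(n+1))) ^ Real.exp (-K*(t-a)))
      atTop (nhds 0) := by
    have h0 : Tendsto (fun n : ℕ => (1:ℝ) / (n + 1)) atTop (nhds 0) :=
      tendsto_one_div_add_atTop_nhds_zero_nat
    have h1 : Tendsto (fun n : ℕ => 2*(η₀/(n+1))) atTop (nhds 0) := by
      have h2 := h0.const_mul (2*η₀)
      simp only [mul_zero] at h2
      convert h2 using 2 with n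
      ring
    have h2 : ContinuousAt (fun x : ℝ => x ^ Real.exp (-K*(t-a))) 0 :=
      Real.continuousAt_rpow_const 0 _ (Or.inr hw.le)
    have h3 := (h2.tendsto).comp h1
    rw [Real.zero_rpow hw.ne'] at h3
    have h4 := h3.const_mul (Real.exp 1)
    simp only [mul_zero] at h4
    exact h4
  have hle : f t ≤ 0 := ge_of_tendsto' htend key
  exact le_antisymm hle (hf0 t ht)

lemma gron {a c A M : ℝ} {f : ℝ → ℝ} (hac : a ≤ c) (hA : 0 ≤ A) (hM : 0 ≤ M)
    (hf : ContinuousOn f (Set.Icc a c))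
    (hineq : ∀ t ∈ Set.Icc a c, f t ≤ A + ∫ s in a..t, M * (f s + 1)) :
    ∀ t ∈ Set.Icc a c, f t ≤ (A + 2) * Real.exp (M*(c-a)) := by
  set Ψ : ℝ → ℝ := fun t => (A + 2) * Real.exp (M*(t-a)) - 1 with hΨdef
  have hΨc : Continuous Ψ := (continuous_const.mul (Real.continuous_exp.comp
    (continuous_const.mul (continuous_id.sub continuous_const)))).sub continuous_const
  have hΨd : ∀ t, HasDerivAt Ψ (M * (Ψ t + 1)) t := by
    intro t
    have h1 : HasDerivAt (fun t : ℝ => M*(t-a)) M t := by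
      simpa using ((hasDerivAt_id t).sub_const a).const_mul M
    have h2 := (h1.exp.const_mul (A+2)).sub_const 1
    refine h2.congr_deriv ?_
    show _ = M * ((A + 2) * Real.exp (M*(t-a)) - 1 + 1)
    ring
  have hΨa : Ψ a = A + 1 := by
    simp only [hΨdef]
    rw [show M*(a-a) = 0 by ring, Real.exp_zero]
    ring
  have hfa : f a ≤ A := by
    have := hineq a (Set.left_mem_Icc.2 hac)
    simpa using this
  have main : ∀ t ∈ Set.Icc a c, f t ≤ Ψ t := by
    by_contra hcon
    push_neg at hcon
    obtain ⟨t₀, ht₀, ht₀'⟩ := hcon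
    set S : Set ℝ := Set.Icc a c ∩ (fun t => f t - Ψ t) ⁻¹' Set.Ici 0 with hS
    have hScl : IsClosed S :=
      (hf.sub hΨc.continuousOn).preimage_isClosed_of_isClosed isClosed_Icc isClosed_Ici
    have hSne : S.Nonempty := ⟨t₀, ht₀, by simp only [Set.mem_preimage, Set.mem_Ici]; linarith⟩
    have hSbd : BddBelow S := ⟨a, fun s hs => hs.1.1⟩
    set t₁ := sInf S with ht₁def
    have ht₁S : t₁ ∈ S := hScl.csInf_mem hSne hSbd
    have ht₁Icc : t₁ ∈ Set.Icc a c := ht₁S.1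
    have ht₁Ψ : Ψ t₁ ≤ f t₁ := by
      have := ht₁S.2
      simp only [Set.mem_preimage, Set.mem_Ici] at this
      linarith
    have hfa' : f a < Ψ a := by rw [hΨa]; linarith
    have hat₁ : a < t₁ := by
      rcases lt_or_eq_of_le ht₁Icc.1 with h | h
      · exact h
      · exfalso; rw [← h] at ht₁Ψ; linarith
    have hless : ∀ s, a ≤ s → s < t₁ → f s < Ψ s := by
      intro s hs hs'
      by_contra hcs
      push_neg at hcs
      have : s ∈ S := ⟨⟨hs, le_trans hs'.le ht₁Icc.2⟩,
        by simp only [Set.mem_preimage, Set.mem_Ici]; linarith⟩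
      exact absurd (csInf_le hSbd this) (not_le.2 hs')
    have hsub : Set.Ico a t₁ ⊆ Set.Icc a c :=
      fun s hs => ⟨hs.1, le_trans hs.2.le ht₁Icc.2⟩
    have hle : f t₁ ≤ Ψ t₁ := by
      have hclos : t₁ ∈ closure (Set.Ico a t₁) := by
        rw [closure_Ico hat₁.ne]
        exact Set.right_mem_Icc.2 hat₁.le
      have hne := mem_closure_iff_nhdsWithin_neBot.1 hclos
      have tendf : Tendsto f (nhdsWithin t₁ (Set.Ico a t₁)) (nhds (f t₁)) :=
        (hf.continuousWithinAt ht₁Icc).mono_left (nhdsWithin_mono _ hsub)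
      have tendΨ : Tendsto Ψ (nhdsWithin t₁ (Set.Ico a t₁)) (nhds (Ψ t₁)) :=
        (hΨc.tendsto t₁).mono_left nhdsWithin_le_nhds
      refine le_of_tendsto_of_tendsto tendf tendΨ ?_
      filter_upwards [eventually_mem_nhdsWithin] with s hs
      exact (hless s hs.1 hs.2).le
    have heq : f t₁ = Ψ t₁ := le_antisymm hle ht₁Ψ
    have hIccsub : Set.Icc a t₁ ⊆ Set.Icc a c := fun s hs => ⟨hs.1, le_trans hs.2 ht₁Icc.2⟩
    have hfle : ∀ s ∈ Set.Icc a t₁, f s ≤ Ψ s := by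
      intro s hs
      rcases lt_or_eq_of_le hs.2 with h | h
      · exact (hless s hs.1 h).le
      · rw [h, heq]
    have hint1 : IntervalIntegrable (fun s => M * (f s + 1)) volume a t₁ := by
      apply ContinuousOn.intervalIntegrable
      rw [Set.uIcc_of_le hat₁.le]
      exact continuous_const.continuousOn.mul ((hf.mono hIccsub).add continuous_const.continuousOn)
    have hint2 : IntervalIntegrable (fun s => M * (Ψ s + 1)) volume a t₁ :=
      (continuous_const.mul (hΨc.add continuous_const)).intervalIntegrable a t₁
    have hmono : (∫ s in a..t₁, M * (f s + 1)) ≤ ∫ s in a..t₁, M * (Ψ s + 1) := by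
      apply intervalIntegral.integral_mono_on hat₁.le hint1 hint2
      intro s hs
      have := hfle s hs
      nlinarith
    have hFTC : (∫ s in a..t₁, M * (Ψ s + 1)) = Ψ t₁ - Ψ a :=
      intervalIntegral.integral_eq_sub_of_hasDerivAt (fun s _ => hΨd s) hint2
    have happ := hineq t₁ ht₁Icc
    rw [hFTC, hΨa] at hmono
    rw [heq] at happ
    linarith
  intro t ht
  have h1 := main t ht
  have h2 : Real.exp (M*(t-a)) ≤ Real.exp (M*(c-a)) :=
    Real.exp_le_exp.2 (mul_le_mul_of_nonneg_left (sub_le_sub_right ht.2 a) hM)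
  have h3 : (0:ℝ) < Real.exp (M*(t-a)) := Real.exp_pos _
  simp only [hΨdef] at h1
  nlinarith


variable {E : Type*} [NormedAddCommGroup E] [NormedSpace ℝ E] [CompleteSpace E]

/-- Picard iterates. -/
noncomputable def pic (w : ℝ → E → E) (s₀ : ℝ) (p : E) : ℕ → ℝ → E
  | 0 => fun _ => p
  | (n+1) => fun t => p + ∫ s in s₀..t, w s (pic w s₀ p n s)

/-- comparison sequence -/
noncomputable def bseq (K s₀ : ℝ) : ℕ → ℝ → ℝ
  | 0 => fun _ => 1
  | (n+1) => fun t => ∫ s in s₀..t, om K (max 0 (min 1 (bseq K s₀ n s)))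

lemma pr_mem {r : ℝ} : 0 ≤ max 0 (min 1 r) ∧ max 0 (min 1 r) ≤ 1 :=
  ⟨le_max_left _ _, max_le zero_le_one (min_le_left _ _)⟩

lemma pr_eq {r : ℝ} (h0 : 0 ≤ r) (h1 : r ≤ 1) : max 0 (min 1 r) = r := by
  rw [min_eq_right h1, max_eq_right h0]

lemma pr_mono {r r' : ℝ} (h : r ≤ r') : max 0 (min 1 r) ≤ max 0 (min 1 r') :=
  max_le_max le_rfl (min_le_min le_rfl h)


lemma om_pr_meas {K : ℝ} {g : ℝ → ℝ} (hg : Measurable g) :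
    Measurable fun s => om K (max 0 (min 1 (g s))) := by
  have h2 : Measurable fun s => max 0 (min 1 (g s)) :=
    measurable_const.max (measurable_const.min hg)
  unfold om
  exact (measurable_const.mul h2).mul (measurable_const.sub (Real.measurable_log.comp h2))

lemma intInt_om_pr {K : ℝ} (hK : 0 < K) {g : ℝ → ℝ} (hg : Measurable g) (a c : ℝ) :
    IntervalIntegrable (fun s => om K (max 0 (min 1 (g s)))) volume a c := by
  have hm := om_pr_meas (K := K) hg
  have key : ∀ x y : ℝ, x ≤ y → IntervalIntegrable (fun s => om K (max 0 (min 1 (g s)))) volume x y := by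
    intro x y hxy
    apply intInt_of_bdd hxy hm.aestronglyMeasurable.restrict
    intro s _
    rw [abs_of_nonneg (om_nonneg hK.le pr_mem.1 pr_mem.2)]
    exact om_le hK.le pr_mem.1 pr_mem.2
  rcases le_total a c with h | h
  · exact key a c h
  · exact (key c a h).symm

lemma abs_min_sub_min {a b c : ℝ} : |min a c - min b c| ≤ |a - b| := by
  have h1 := abs_max_sub_max_le_abs (-a) (-b) (-c)
  rw [show a ⊓ c = -(-a ⊔ -c) by rw [← neg_inf, neg_neg],
    show b ⊓ c = -(-b ⊔ -c) by rw [← neg_inf, neg_neg]]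
  calc |-max (-a) (-c) - -max (-b) (-c)| = |(-a) ⊔ (-c) - (-b) ⊔ (-c)| := by
        rw [← abs_neg]; congr 1; ring
  _ ≤ |(-a) - (-b)| := h1
  _ = |a - b| := by rw [← abs_neg]; congr 1; ring

/-- Local existence by Picard iteration under a log-Lipschitz modulus. -/
lemma loc {w : ℝ → E → E} {K B τ : ℝ} {s₀ : ℝ} {p : E}
    (hK : 0 < K) (hB : 0 < B) (hτ : 0 < τ)
    (hwc : Continuous fun q : ℝ × E => w q.1 q.2)
    (hwlip : ∀ s : ℝ, ∀ x x' : E, 0 < ‖x - x'‖ → ‖x - x'‖ ≤ 1 →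
        ‖w s x - w s x'‖ ≤ K * ‖x - x'‖ * (1 - Real.log ‖x - x'‖))
    (hwB : ∀ s ∈ Set.Icc s₀ (s₀+τ), ∀ x : E, ‖x - p‖ ≤ 1 → ‖w s x‖ ≤ B)
    (hτB : τ * B ≤ 1/2) (hτK : τ * K ≤ 1/2) :
    ∃ f : ℝ → E, Continuous f ∧ f s₀ = p ∧
      ∀ t ∈ Set.Icc s₀ (s₀+τ), f t = p + (∫ s in s₀..t, w s (f s))
        ∧ ‖f t - p‖ ≤ B * (t - s₀) := by
  set I := Set.Icc s₀ (s₀+τ) with hI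
  set X := pic w s₀ p with hX
  set b := bseq K s₀ with hb
  -- continuity of iterates and of the composed integrands
  have hXc : ∀ n, Continuous (X n) ∧ Continuous (fun s => w s (X n s)) := by
    intro n
    induction n with
    | zero =>
      constructor
      · exact continuous_const
      · exact hwc.comp (continuous_id.prodMk continuous_const)
    | succ n ih =>
      have h1 : Continuous (X (n+1)) := by
        have := intervalIntegral.continuous_primitive (μ := volume)
          (fun a b => ih.2.intervalIntegrable a b) s₀
        exact continuous_const.add this
      exact ⟨h1, hwc.comp (continuous_id.prodMk h1)⟩
  -- iterates stay in the ball
  have hXball : ∀ n, ∀ t ∈ I, ‖X n t - p‖ ≤ B * (t - s₀) := by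
    intro n
    induction n with
    | zero =>
      intro t ht
      simp only [hX, pic, sub_self, norm_zero]
      nlinarith [ht.1]
    | succ n ih =>
      intro t ht
      have h1 : X (n+1) t - p = ∫ s in s₀..t, w s (X n s) := by
        simp only [hX, pic]; abel
      rw [h1]
      have h2 : ∀ s ∈ Set.uIoc s₀ t, ‖w s (X n s)‖ ≤ B := by
        intro s hs
        rw [Set.uIoc_of_le ht.1] at hs
        have hsI : s ∈ I := ⟨hs.1.le, le_trans hs.2 ht.2⟩
        apply hwB s hsI
        have := ih s hsI
        nlinarith [hs.1, hs.2, ht.2]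
      calc ‖∫ s in s₀..t, w s (X n s)‖ ≤ B * |t - s₀| :=
        intervalIntegral.norm_integral_le_of_norm_le_const h2
      _ = B * (t - s₀) := by rw [abs_of_nonneg (by linarith [ht.1])]
  have hXhalf : ∀ n, ∀ t ∈ I, ‖X n t - p‖ ≤ 1/2 := by
    intro n t ht
    have := hXball n t ht
    nlinarith [ht.2, ht.1]
  -- facts about b
  have hbc : ∀ n, Continuous (b n) ∧
      (∀ a c : ℝ, IntervalIntegrable (fun s => om K (max 0 (min 1 (b n s)))) volume a c) := by
    intro n
    induction n with
    | zero =>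
      refine ⟨continuous_const, ?_⟩
      intro a c
      simp only [hb, bseq]
      exact (continuous_const (y := om K (max 0 (min 1 (1:ℝ))))).intervalIntegrable a c
    | succ n ih =>
      have hmeas : Measurable fun s => om K (max 0 (min 1 (b (n+1) s))) := by
        have hbm : Measurable (b (n+1)) := by
          have : Continuous (b (n+1)) := by
            have := intervalIntegral.continuous_primitive (μ := volume) ih.2 s₀
            simpa only [hb, bseq] using this
          exact this.measurable
        have hbm2 : Measurable fun s => max 0 (min 1 (b (n+1) s)) :=
          measurable_const.max (measurable_const.min hbm)
        unfold om
        exact (measurable_const.mul hbm2).mul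
          (measurable_const.sub (Real.measurable_log.comp hbm2))
      have hcont : Continuous (b (n+1)) := by
        have := intervalIntegral.continuous_primitive (μ := volume) ih.2 s₀
        simpa only [hb, bseq] using this
      refine ⟨hcont, ?_⟩
      intro a c
      rcases le_total a c with h | h
      · apply intInt_of_bdd h hmeas.aestronglyMeasurable.restrict
        intro s _
        rw [abs_of_nonneg (om_nonneg hK.le pr_mem.1 pr_mem.2)]
        exact om_le hK.le pr_mem.1 pr_mem.2
      · apply IntervalIntegrable.symm
        apply intInt_of_bdd h hmeas.aestronglyMeasurable.restrict
        intro s _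
        rw [abs_of_nonneg (om_nonneg hK.le pr_mem.1 pr_mem.2)]
        exact om_le hK.le pr_mem.1 pr_mem.2
  -- on I, b is decreasing in n, in [0,1]
  have hb0 : ∀ n, ∀ t ∈ I, 0 ≤ b n t := by
    intro n
    cases n with
    | zero => intro t _; simp [hb, bseq]
    | succ n =>
      intro t ht
      simp only [hb, bseq]
      apply intervalIntegral.integral_nonneg ht.1
      intro s _
      exact om_nonneg hK.le pr_mem.1 pr_mem.2
  have hbdec : ∀ n, ∀ t ∈ I, b (n+1) t ≤ b n t := by
    intro n
    induction n with
    | zero =>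
      intro t ht
      have h1 : b 1 t = K * (t - s₀) := by
        simp only [hb, bseq]
        rw [pr_eq zero_le_one le_rfl]
        have : om K 1 = K := by simp [om]
        rw [this]
        rw [intervalIntegral.integral_const, smul_eq_mul]
        ring
      rw [h1]
      show K * (t - s₀) ≤ 1
      nlinarith [ht.1, ht.2]
    | succ n ih =>
      intro t ht
      simp only [hb, bseq]
      apply intervalIntegral.integral_mono_on ht.1 ((hbc (n+1)).2 s₀ t) ((hbc n).2 s₀ t)
      intro s hs
      have hsI : s ∈ I := ⟨hs.1, le_trans hs.2 ht.2⟩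
      exact om_mono hK.le pr_mem.1 (pr_mono (ih s hsI)) pr_mem.2
  have hble : ∀ n, ∀ t ∈ I, b n t ≤ 1 := by
    intro n
    induction n with
    | zero => intro t _; simp [hb, bseq]
    | succ n ih => intro t ht; exact le_trans (hbdec n t ht) (ih t ht)
  have hbanti : ∀ t ∈ I, Antitone (fun n => b n t) := by
    intro t ht
    apply antitone_nat_of_succ_le
    intro n
    exact hbdec n t ht
  -- the difference estimate
  have hD : ∀ n m, ∀ t ∈ I, ‖X (n+m) t - X n t‖ ≤ b n t := by
    intro n
    induction n with
    | zero =>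
      intro m t ht
      have h1 : ‖X m t - X 0 t‖ ≤ 1 := by
        have h2 := hXhalf m t ht
        have h3 := hXhalf 0 t ht
        calc ‖X m t - X 0 t‖ = ‖(X m t - p) - (X 0 t - p)‖ := by abel_nf
        _ ≤ ‖X m t - p‖ + ‖X 0 t - p‖ := norm_sub_le _ _
        _ ≤ 1 := by linarith
      simpa [hb, bseq] using h1
    | succ n ih =>
      intro m t ht
      have harith : n + 1 + m = (n + m) + 1 := by omega
      rw [harith]
      have h1 : X ((n+m)+1) t - X (n+1) t
          = ∫ s in s₀..t, (w s (X (n+m) s) - w s (X n s)) := by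
        rw [intervalIntegral.integral_sub ((hXc (n+m)).2.intervalIntegrable s₀ t)
          ((hXc n).2.intervalIntegrable s₀ t)]
        simp only [hX, pic]
        abel
      rw [h1]
      have h2 : ‖∫ s in s₀..t, (w s (X (n+m) s) - w s (X n s))‖
          ≤ ∫ s in s₀..t, ‖w s (X (n+m) s) - w s (X n s)‖ :=
        intervalIntegral.norm_integral_le_integral_norm ht.1
      have h3 : (∫ s in s₀..t, ‖w s (X (n+m) s) - w s (X n s)‖)
          ≤ ∫ s in s₀..t, om K (max 0 (min 1 (b n s))) := by
        apply intervalIntegral.integral_mono_on ht.1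
        · exact (((hXc (n+m)).2.sub (hXc n).2).norm).intervalIntegrable s₀ t
        · exact (hbc n).2 s₀ t
        · intro s hs
          have hsI : s ∈ I := ⟨hs.1, le_trans hs.2 ht.2⟩
          have hr : ‖X (n+m) s - X n s‖ ≤ b n s := ih m s hsI
          have hb1 : b n s ≤ 1 := hble n s hsI
          have hb0' : 0 ≤ b n s := hb0 n s hsI
          rw [pr_eq hb0' hb1]
          rcases eq_or_lt_of_le (norm_nonneg (X (n+m) s - X n s)) with h | h
          · have hz : X (n+m) s - X n s = 0 := norm_eq_zero.mp h.symm
            have hXX : X (n+m) s = X n s := sub_eq_zero.mp hz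
            rw [hXX, sub_self, norm_zero]
            exact om_nonneg hK.le hb0' hb1
          · calc ‖w s (X (n+m) s) - w s (X n s)‖
                ≤ K * ‖X (n+m) s - X n s‖ * (1 - Real.log ‖X (n+m) s - X n s‖) :=
              hwlip s _ _ h (le_trans hr hb1)
            _ ≤ K * (b n s) * (1 - Real.log (b n s)) :=
              om_mono hK.le h.le hr hb1
        
      calc ‖∫ s in s₀..t, (w s (X (n+m) s) - w s (X n s))‖
          ≤ ∫ s in s₀..t, om K (max 0 (min 1 (b n s))) := le_trans h2 h3
      _ = b (n+1) t := by simp only [hb, bseq]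
  -- limit of the comparison sequence
  have hbbdd : ∀ t ∈ I, BddBelow (Set.range fun n => b n t) := by
    intro t ht
    refine ⟨0, ?_⟩
    rintro x ⟨n, rfl⟩
    exact hb0 n t ht
  set β : ℝ → ℝ := fun t => ⨅ n, b n t with hβ
  have hβtend : ∀ t ∈ I, Tendsto (fun n => b n t) atTop (nhds (β t)) := by
    intro t ht
    exact tendsto_atTop_ciInf (hbanti t ht) (hbbdd t ht)
  have hβ0 : ∀ t ∈ I, 0 ≤ β t := fun t ht => le_ciInf (fun n => hb0 n t ht)
  have hβle1 : ∀ t ∈ I, β t ≤ 1 := fun t ht =>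
    le_trans (ciInf_le (hbbdd t ht) 0) (hble 0 t ht)
  have hβle : ∀ n, ∀ t ∈ I, β t ≤ b n t := fun n t ht => ciInf_le (hbbdd t ht) n
  have hβm : Measurable β := Measurable.iInf (fun n => (hbc n).1.measurable)
  have hβineq : ∀ t ∈ I, β t ≤ ∫ s in s₀..t, om K (max 0 (min 1 (β s))) := by
    intro t ht
    have hIt : Set.Icc s₀ t ⊆ I := fun s hs => ⟨hs.1, le_trans hs.2 ht.2⟩
    haveI : IsFiniteMeasure (volume.restrict (Set.Ioc s₀ t)) :=
      ⟨by rw [Measure.restrict_apply_univ]; exact measure_Ioc_lt_top⟩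
    have hbn1 : ∀ n : ℕ, b (n+1) t = ∫ s in Set.Ioc s₀ t, om K (max 0 (min 1 (b n s))) := by
      intro n
      have h1 : b (n+1) t = ∫ s in s₀..t, om K (max 0 (min 1 (b n s))) := by
        simp only [hb, bseq]
      rw [h1, intervalIntegral.integral_of_le ht.1]
    have hDCT : Tendsto (fun n => ∫ s in Set.Ioc s₀ t, om K (max 0 (min 1 (b n s)))) atTop
        (nhds (∫ s in Set.Ioc s₀ t, om K (max 0 (min 1 (β s))))) := by
      apply MeasureTheory.tendsto_integral_of_dominated_convergence (bound := fun _ => 2*K)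
      · exact fun n => (om_pr_meas (hbc n).1.measurable).aestronglyMeasurable.restrict
      · exact integrable_const _
      · intro n
        apply ae_of_all
        intro s
        rw [Real.norm_eq_abs, abs_of_nonneg (om_nonneg hK.le pr_mem.1 pr_mem.2)]
        exact om_le hK.le pr_mem.1 pr_mem.2
      · apply (ae_restrict_iff' measurableSet_Ioc).2
        apply ae_of_all
        intro s hs
        have hsI : s ∈ I := hIt (Set.Ioc_subset_Icc_self hs)
        have hpr : Tendsto (fun n => max 0 (min 1 (b n s))) atTop
            (nhds (max 0 (min 1 (β s)))) := by
          have hcpr : Continuous fun r : ℝ => max 0 (min 1 r) :=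
            continuous_const.max (continuous_const.min continuous_id)
          exact (hcpr.tendsto _).comp (hβtend s hsI)
        exact om_tendsto hK.le (fun n => pr_mem.1) (fun n => pr_mem.2) hpr
    have hlim2 : Tendsto (fun n => b (n+1) t) atTop
        (nhds (∫ s in Set.Ioc s₀ t, om K (max 0 (min 1 (β s))))) := by
      have : (fun n : ℕ => b (n+1) t)
          = fun n => ∫ s in Set.Ioc s₀ t, om K (max 0 (min 1 (b n s))) := funext hbn1
      rw [this]
      exact hDCT
    have h3 := ge_of_tendsto hlim2 (Filter.Eventually.of_forall fun n => hβle (n+1) t ht)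
    rwa [intervalIntegral.integral_of_le ht.1]
  set γ : ℝ → ℝ := fun t => ∫ s in s₀..t, om K (max 0 (min 1 (β s))) with hγ
  have hγc : Continuous γ :=
    intervalIntegral.continuous_primitive (μ := volume) (intInt_om_pr hK hβm) s₀
  have hγ0 : ∀ t ∈ I, 0 ≤ γ t := fun t ht =>
    intervalIntegral.integral_nonneg ht.1 (fun s _ => om_nonneg hK.le pr_mem.1 pr_mem.2)
  have hβγ : ∀ t ∈ I, β t ≤ γ t := fun t ht => hβineq t ht
  have hIcc : s₀ ≤ s₀ + τ := by linarith
  have hγzero : ∀ t ∈ I, γ t = 0 := by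
    apply osgood_zero hK hIcc hγc.continuousOn hγ0
    · show γ s₀ = 0
      simp [hγ]
    · intro t ht hcond
      have hIt : Set.Icc s₀ t ⊆ I := fun s hs => ⟨hs.1, le_trans hs.2 ht.2⟩
      have hγm : Measurable γ := hγc.measurable
      have hint2 : IntervalIntegrable (fun s => K * γ s * (1 - Real.log (γ s))) volume s₀ t := by
        apply intInt_of_bdd (M := 2*K) ht.1 (((measurable_const.mul hγm).mul
          (measurable_const.sub (Real.measurable_log.comp hγm))).aestronglyMeasurable.restrict)
        intro s hs
        have hsI : s ∈ I := hIt (Set.Ioc_subset_Icc_self hs)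
        have h0 := hγ0 s hsI
        have h1 := hcond s (Set.Ioc_subset_Icc_self hs)
        change |K * γ s * (1 - Real.log (γ s))| ≤ 2*K
        have e1 := om_nonneg hK.le h0 h1
        have e2 := om_le hK.le h0 h1
        simp only [om] at e1 e2
        rw [abs_of_nonneg e1]
        exact e2
      show γ t ≤ _
      have h4 : γ t ≤ ∫ s in s₀..t, K * γ s * (1 - Real.log (γ s)) := by
        apply intervalIntegral.integral_mono_on ht.1 (intInt_om_pr hK hβm s₀ t) hint2
        intro s hs
        have hsI : s ∈ I := hIt hs
        rw [pr_eq (hβ0 s hsI) (hβle1 s hsI)]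
        have h5 := om_mono hK.le (hβ0 s hsI) (hβγ s hsI) (hcond s hs)
        simpa only [om] using h5
      exact h4
  have hβzero : ∀ t ∈ I, β t = 0 := fun t ht =>
    le_antisymm ((hβγ t ht).trans (le_of_eq (hγzero t ht))) (hβ0 t ht)
  -- Cauchy and limit
  have hcauchy : ∀ t ∈ I, ∃ x : E, Tendsto (fun n => X n t) atTop (nhds x) := by
    intro t ht
    apply cauchySeq_tendsto_of_complete
    apply cauchySeq_of_le_tendsto_0 (fun N => 2 * b N t)
    · intro n m N hn hm
      have key : ∀ k, N ≤ k → ‖X k t - X N t‖ ≤ b N t := by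
        intro k hk
        have h2 := hD N (k - N) t ht
        rw [show N + (k - N) = k by omega] at h2
        exact h2
      rw [dist_eq_norm]
      calc ‖X n t - X m t‖ = ‖(X n t - X N t) - (X m t - X N t)‖ := by abel_nf
      _ ≤ ‖X n t - X N t‖ + ‖X m t - X N t‖ := norm_sub_le _ _
      _ ≤ 2 * b N t := by linarith [key n hn, key m hm]
    · have h5 := hβtend t ht
      rw [hβzero t ht] at h5
      have h6 := h5.const_mul 2
      simpa using h6
  have hlimch : ∀ t : ℝ, ∃ x : E, t ∈ I → Tendsto (fun n => X n t) atTop (nhds x) := by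
    intro t
    by_cases ht : t ∈ I
    · obtain ⟨x, hx⟩ := hcauchy t ht
      exact ⟨x, fun _ => hx⟩
    · exact ⟨p, fun h => absurd h ht⟩
  choose F hF using hlimch
  -- Lipschitz bounds
  have hXlip : ∀ n, ∀ t ∈ I, ∀ t' ∈ I, ‖X n t - X n t'‖ ≤ B * |t - t'| := by
    intro n
    cases n with
    | zero =>
      intro t _ t' _
      simp only [hX, pic, sub_self, norm_zero]
      positivity
    | succ n =>
      intro t ht t' ht'
      have h2 := intervalIntegral.integral_add_adjacent_intervals (μ := volume)
        ((hXc n).2.intervalIntegrable s₀ t') ((hXc n).2.intervalIntegrable t' t)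
      have h1 : X (n+1) t - X (n+1) t' = ∫ s in t'..t, w s (X n s) := by
        simp only [hX, pic]
        rw [← h2]
        abel
      rw [h1]
      apply intervalIntegral.norm_integral_le_of_norm_le_const
      intro s hs
      have hsI : s ∈ I := by
        rcases Set.mem_uIoc.1 hs with ⟨h3, h4⟩ | ⟨h3, h4⟩
        · exact ⟨le_trans ht'.1 h3.le, le_trans h4 ht.2⟩
        · exact ⟨le_trans ht.1 h3.le, le_trans h4 ht'.2⟩
      exact hwB s hsI _ (le_trans (hXhalf n s hsI) (by norm_num))
  have hFlipI : ∀ t ∈ I, ∀ t' ∈ I, ‖F t - F t'‖ ≤ B * |t - t'| := by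
    intro t ht t' ht'
    have h1 : Tendsto (fun n => ‖X n t - X n t'‖) atTop (nhds ‖F t - F t'‖) :=
      ((hF t ht).sub (hF t' ht')).norm
    exact le_of_tendsto h1 (Filter.Eventually.of_forall fun n => hXlip n t ht t' ht')
  have hFball : ∀ t ∈ I, ‖F t - p‖ ≤ B * (t - s₀) := by
    intro t ht
    have h1 : Tendsto (fun n => ‖X n t - p‖) atTop (nhds ‖F t - p‖) :=
      ((hF t ht).sub tendsto_const_nhds).norm
    exact le_of_tendsto h1 (Filter.Eventually.of_forall fun n => hXball n t ht)
  have hs₀I : s₀ ∈ I := ⟨le_refl _, hIcc⟩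
  have hFs₀ : F s₀ = p := by
    have h1 := hFball s₀ hs₀I
    simp only [sub_self, mul_zero] at h1
    have h2 : ‖F s₀ - p‖ = 0 := le_antisymm h1 (norm_nonneg _)
    rw [norm_eq_zero, sub_eq_zero] at h2
    exact h2
  -- the integral equation for F
  have hFeq : ∀ t ∈ I, F t = p + ∫ s in s₀..t, w s (F s) := by
    intro t ht
    have hIt : Set.Icc s₀ t ⊆ I := fun s hs => ⟨hs.1, le_trans hs.2 ht.2⟩
    haveI : IsFiniteMeasure (volume.restrict (Set.Ioc s₀ t)) :=
      ⟨by rw [Measure.restrict_apply_univ]; exact measure_Ioc_lt_top⟩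
    have h1 : Tendsto (fun n => X (n+1) t) atTop (nhds (F t)) :=
      (hF t ht).comp (tendsto_add_atTop_nat 1)
    have hDCT : Tendsto (fun n => ∫ s in Set.Ioc s₀ t, w s (X n s)) atTop
        (nhds (∫ s in Set.Ioc s₀ t, w s (F s))) := by
      apply MeasureTheory.tendsto_integral_of_dominated_convergence (bound := fun _ => B)
      · exact fun n => (hXc n).2.aestronglyMeasurable.restrict
      · exact integrable_const _
      · intro n
        apply (ae_restrict_iff' measurableSet_Ioc).2
        apply ae_of_all
        intro s hs
        have hsI : s ∈ I := hIt (Set.Ioc_subset_Icc_self hs)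
        exact hwB s hsI _ (le_trans (hXhalf n s hsI) (by norm_num))
      · apply (ae_restrict_iff' measurableSet_Ioc).2
        apply ae_of_all
        intro s hs
        have hsI : s ∈ I := hIt (Set.Ioc_subset_Icc_self hs)
        exact (hwc.tendsto (s, F s)).comp (tendsto_const_nhds.prodMk_nhds (hF s hsI))
    have h2 : Tendsto (fun n => X (n+1) t) atTop
        (nhds (p + ∫ s in Set.Ioc s₀ t, w s (F s))) := by
      have h3 : (fun n : ℕ => X (n+1) t)
          = fun n => p + ∫ s in Set.Ioc s₀ t, w s (X n s) := by
        funext n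
        show pic w s₀ p (n+1) t = _
        simp only [pic]
        rw [intervalIntegral.integral_of_le ht.1]
      rw [h3]
      exact hDCT.const_add p
    have h4 := tendsto_nhds_unique h1 h2
    rw [h4, intervalIntegral.integral_of_le ht.1]
  -- final function via clamping
  set cl : ℝ → ℝ := fun t => max s₀ (min t (s₀+τ)) with hcl
  have hclI : ∀ t, cl t ∈ I := fun t => ⟨le_max_left _ _, max_le hIcc (min_le_right _ _)⟩
  have hclid : ∀ t ∈ I, cl t = t := by
    intro t ht
    simp only [hcl]
    rw [min_eq_left ht.2, max_eq_right ht.1]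
  refine ⟨fun t => F (cl t), ?_, ?_, ?_⟩
  · apply (LipschitzWith.of_dist_le_mul (K := Real.toNNReal B) ?_).continuous
    intro t t'
    rw [dist_eq_norm, dist_eq_norm, Real.coe_toNNReal B hB.le]
    have h1 : ‖F (cl t) - F (cl t')‖ ≤ B * |cl t - cl t'| := hFlipI _ (hclI t) _ (hclI t')
    have h2 : |cl t - cl t'| ≤ |t - t'| := by
      simp only [hcl]
      rw [max_comm s₀ (min t (s₀+τ)), max_comm s₀ (min t' (s₀+τ))]
      calc |min t (s₀+τ) ⊔ s₀ - min t' (s₀+τ) ⊔ s₀| ≤ |min t (s₀+τ) - min t' (s₀+τ)| :=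
        abs_max_sub_max_le_abs _ _ _
      _ ≤ |t - t'| := abs_min_sub_min
    calc ‖F (cl t) - F (cl t')‖ ≤ B * |cl t - cl t'| := h1
    _ ≤ B * |t - t'| := by nlinarith [abs_nonneg (cl t - cl t'), abs_nonneg (t - t')]
  · show F (cl s₀) = p
    rw [hclid s₀ hs₀I, hFs₀]
  · intro t ht
    have hIt : Set.Icc s₀ t ⊆ I := fun s hs => ⟨hs.1, le_trans hs.2 ht.2⟩
    constructor
    · show F (cl t) = p + ∫ s in s₀..t, w s (F (cl s))
      rw [hclid t ht, hFeq t ht]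
      have heqint : (∫ s in s₀..t, w s (F (cl s))) = ∫ s in s₀..t, w s (F s) := by
        apply intervalIntegral.integral_congr
        intro s hs
        rw [Set.uIcc_of_le ht.1] at hs
        show w s (F (cl s)) = w s (F s)
        rw [hclid s (hIt hs)]
      rw [heqint]
    · show ‖F (cl t) - p‖ ≤ B * (t - s₀)
      rw [hclid t ht]
      exact hFball t ht


set_option maxHeartbeats 1000000 in
/-- Global existence on `[0,c']` by chaining local solutions. -/
lemma exist {w : ℝ → E → E} {K M₀ c' : ℝ} (hK : 0 < K) (hM₀ : 0 ≤ M₀) (hc' : 0 < c')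
    (hwc : Continuous fun q : ℝ × E => w q.1 q.2)
    (hwlip : ∀ s : ℝ, ∀ x x' : E, 0 < ‖x - x'‖ → ‖x - x'‖ ≤ 1 →
        ‖w s x - w s x'‖ ≤ K * ‖x - x'‖ * (1 - Real.log ‖x - x'‖))
    (hwM : ∀ s : ℝ, ‖w s 0‖ ≤ M₀)
    (hwchain : ∀ s : ℝ, ∀ x x' : E, ‖w s x - w s x'‖ ≤ 2*K*(‖x - x'‖ + 1))
    (y : E) :
    ∃ f : ℝ → E, Continuous f ∧ f 0 = y ∧
      ∀ t ∈ Set.Icc (0:ℝ) c', f t = y + ∫ s in (0:ℝ)..t, w s (f s) := by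
  set cc := (M₀ + 6*K)/(2*K) with hcc
  have hccpos : 0 < cc := by positivity
  set ρ := (‖y‖ + cc) * Real.exp (2*K*c') with hρ
  have hρpos : 0 < ρ := by positivity
  set Bρ := 2*K*(ρ + cc) with hBρ
  have hBρpos : 0 < Bρ := by positivity
  set τ := min 1 (min (1/(2*Bρ)) (1/(2*K))) with hτdef
  have hτ : 0 < τ := by
    apply lt_min one_pos
    apply lt_min <;> positivity
  have hτ1 : τ ≤ 1 := min_le_left _ _
  have hτB : τ * Bρ ≤ 1/2 := by
    have h1 : τ ≤ 1/(2*Bρ) := le_trans (min_le_right _ _) (min_le_left _ _)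
    rw [le_div_iff₀ (by positivity)] at h1
    nlinarith
  have hτK : τ * K ≤ 1/2 := by
    have h1 : τ ≤ 1/(2*K) := le_trans (min_le_right _ _) (min_le_right _ _)
    rw [le_div_iff₀ (by positivity)] at h1
    nlinarith
  -- speed bound near any point p with ‖p‖ ≤ ρ
  have hwB : ∀ p : E, ∀ s : ℝ, ∀ x : E, ‖x - p‖ ≤ 1 → ‖w s x‖ ≤ 2*K*(‖p‖ + cc) := by
    intro p s x hx
    have h1 : ‖w s x‖ ≤ ‖w s 0‖ + ‖w s x - w s 0‖ := by
      have := norm_add_le (w s 0) (w s x - w s 0)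
      simpa using this
    have h2 := hwchain s x 0
    simp only [sub_zero] at h2
    have h3 : ‖x‖ ≤ ‖p‖ + 1 := by
      calc ‖x‖ = ‖p + (x - p)‖ := by rw [show p + (x - p) = x by abel]
      _ ≤ ‖p‖ + ‖x - p‖ := norm_add_le _ _
      _ ≤ ‖p‖ + 1 := by linarith
    have h4 : 2*K*cc = M₀ + 6*K := by
      rw [hcc]; field_simp
    calc ‖w s x‖ ≤ M₀ + 2*K*(‖x‖+1) := by linarith [hwM s]
    _ ≤ M₀ + 2*K*(‖p‖+2) := by nlinarith
    _ ≤ 2*K*(‖p‖ + cc) := by nlinarith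
  -- the inductive chaining
  have main : ∀ k : ℕ, ∃ f : ℝ → E, Continuous f ∧ f 0 = y ∧
      ∀ t ∈ Set.Icc (0:ℝ) (min (k*τ) c'), (f t = y + ∫ s in (0:ℝ)..t, w s (f s))
        ∧ (‖f t‖ + cc ≤ (‖y‖ + cc) * Real.exp (2*K*t)) := by
    intro k
    induction k with
    | zero =>
      refine ⟨fun _ => y, continuous_const, rfl, ?_⟩
      intro t ht
      simp only [Nat.cast_zero, zero_mul, min_eq_left hc'.le] at ht
      have ht0 : t = 0 := le_antisymm ht.2 ht.1
      subst ht0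
      constructor
      · simp
      · simp only [mul_zero, Real.exp_zero]
        linarith
    | succ k ih =>
      obtain ⟨f, hfc, hf0, hfp⟩ := ih
      by_cases hkc : c' ≤ k*τ
      · -- nothing to extend
        refine ⟨f, hfc, hf0, ?_⟩
        intro t ht
        apply hfp
        have h5 : c' ≤ ((k+1:ℕ):ℝ)*τ := by
          refine le_trans hkc ?_
          push_cast
          nlinarith
        rw [min_eq_right hkc]
        rw [min_eq_right h5] at ht
        exact ht
      · push_neg at hkc
        have hkτc : min ((k:ℝ)*τ) c' = (k:ℝ)*τ := min_eq_left hkc.le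
        have hkτ0 : (0:ℝ) ≤ (k:ℝ)*τ := by positivity
        have hkmem : (k:ℝ)*τ ∈ Set.Icc (0:ℝ) (min ((k:ℝ)*τ) c') := by
          rw [hkτc]; exact ⟨hkτ0, le_refl _⟩
        obtain ⟨hpeq, hpenv⟩ := hfp _ hkmem
        set p := f ((k:ℝ)*τ) with hp
        have hpρ : ‖p‖ ≤ ρ := by
          have h1 : Real.exp (2*K*((k:ℝ)*τ)) ≤ Real.exp (2*K*c') :=
            Real.exp_le_exp.2 (by nlinarith)
          have h2 : (0:ℝ) < ‖y‖ + cc := by positivity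
          calc ‖p‖ ≤ (‖y‖ + cc) * Real.exp (2*K*((k:ℝ)*τ)) - cc := by linarith
          _ ≤ (‖y‖ + cc) * Real.exp (2*K*c') := by nlinarith
        set B := 2*K*(‖p‖ + cc) with hB
        have hBpos : 0 < B := by positivity
        have hBle : B ≤ Bρ :=
          mul_le_mul_of_nonneg_left (by linarith) (by positivity)
        have hτB' : τ * B ≤ 1/2 :=
          le_trans (mul_le_mul_of_nonneg_left hBle hτ.le) hτB
        obtain ⟨g, hgc, hgs₀, hgp⟩ := loc (w := w) (s₀ := (k:ℝ)*τ) (p := p)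
          hK hBpos hτ hwc hwlip (fun s _ x hx => hwB p s x hx) hτB' hτK
        classical
        refine ⟨fun t => if t ≤ (k:ℝ)*τ then f t else g t, ?_, ?_, ?_⟩
        · apply Continuous.if_le hfc hgc continuous_id continuous_const
          intro t ht'
          have ht'' : t = (k:ℝ)*τ := ht'
          rw [ht'', hgs₀]
        · simp only [if_pos hkτ0, hf0]
        · intro t ht
          have htub : t ≤ (k:ℝ)*τ + τ := by
            have h5 : t ≤ ((k+1 : ℕ):ℝ)*τ := le_trans ht.2 (min_le_left _ _)
            push_cast at h5
            linarith
          by_cases htk : t ≤ (k:ℝ)*τ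
          · have htmem : t ∈ Set.Icc (0:ℝ) (min ((k:ℝ)*τ) c') := by
              rw [hkτc]; exact ⟨ht.1, htk⟩
            obtain ⟨he, hv⟩ := hfp t htmem
            constructor
            · simp only [if_pos htk]
              rw [he]
              congr 1
              apply intervalIntegral.integral_congr
              intro s hs
              rw [Set.uIcc_of_le ht.1] at hs
              have h6 : s ≤ (k:ℝ)*τ := le_trans hs.2 htk
              show w s (f s) = w s (if s ≤ (k:ℝ)*τ then f s else g s)
              rw [if_pos h6]
            · simp only [if_pos htk]
              exact hv
          · push_neg at htk
            have htmem : t ∈ Set.Icc ((k:ℝ)*τ) ((k:ℝ)*τ + τ) := ⟨htk.le, htub⟩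
            obtain ⟨hge, hgb⟩ := hgp t htmem
            have hfeq : ∀ s, s ≤ (k:ℝ)*τ → (if s ≤ (k:ℝ)*τ then f s else g s) = f s :=
              fun s hs => if_pos hs
            have hcont' : Continuous fun s => (if s ≤ (k:ℝ)*τ then f s else g s) := by
              apply Continuous.if_le hfc hgc continuous_id continuous_const
              intro s hs'
              have hs'' : s = (k:ℝ)*τ := hs'
              rw [hs'', hgs₀]
            have hint1 : IntervalIntegrable
                (fun s => w s (if s ≤ (k:ℝ)*τ then f s else g s)) volume 0 ((k:ℝ)*τ) :=
              (hwc.comp (continuous_id.prodMk hcont')).intervalIntegrable _ _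
            have hint2 : IntervalIntegrable
                (fun s => w s (if s ≤ (k:ℝ)*τ then f s else g s)) volume ((k:ℝ)*τ) t :=
              (hwc.comp (continuous_id.prodMk hcont')).intervalIntegrable _ _
            have hsplit := intervalIntegral.integral_add_adjacent_intervals hint1 hint2
            have hc1 : (∫ s in (0:ℝ)..((k:ℝ)*τ), w s (if s ≤ (k:ℝ)*τ then f s else g s))
                = ∫ s in (0:ℝ)..((k:ℝ)*τ), w s (f s) := by
              apply intervalIntegral.integral_congr
              intro s hs
              rw [Set.uIcc_of_le hkτ0] at hs
              show w s (if s ≤ (k:ℝ)*τ then f s else g s) = w s (f s)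
              rw [hfeq s hs.2]
            have hc2 : (∫ s in ((k:ℝ)*τ)..t, w s (if s ≤ (k:ℝ)*τ then f s else g s))
                = ∫ s in ((k:ℝ)*τ)..t, w s (g s) := by
              apply intervalIntegral.integral_congr
              intro s hs
              rw [Set.uIcc_of_le htk.le] at hs
              show w s (if s ≤ (k:ℝ)*τ then f s else g s) = w s (g s)
              rcases lt_or_eq_of_le hs.1 with h | h
              · rw [if_neg (not_le.2 h)]
              · rw [← h, if_pos (le_refl _), ← hp, hgs₀]
            constructor
            · simp only [if_neg (not_le.2 htk)]
              rw [hge, hpeq, ← hsplit, hc1, hc2]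
              abel
            · simp only [if_neg (not_le.2 htk)]
              have h6 : ‖g t‖ ≤ ‖p‖ + B*(t - (k:ℝ)*τ) := by
                calc ‖g t‖ = ‖p + (g t - p)‖ := by rw [show p + (g t - p) = g t by abel]
                _ ≤ ‖p‖ + ‖g t - p‖ := norm_add_le _ _
                _ ≤ ‖p‖ + B*(t - (k:ℝ)*τ) := by linarith
              have h7 : (1 + 2*K*(t - (k:ℝ)*τ)) ≤ Real.exp (2*K*(t - (k:ℝ)*τ)) := by
                have := Real.add_one_le_exp (2*K*(t - (k:ℝ)*τ))
                linarith
              have h8 : (0:ℝ) < ‖p‖ + cc := by positivity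
              have h9 : ‖g t‖ + cc ≤ (‖p‖ + cc) * Real.exp (2*K*(t - (k:ℝ)*τ)) := by
                rw [hB] at h6
                calc ‖g t‖ + cc ≤ (‖p‖ + 2*K*(‖p‖ + cc)*(t - (k:ℝ)*τ)) + cc := by linarith
                _ = (‖p‖ + cc) * (1 + 2*K*(t - (k:ℝ)*τ)) := by ring
                _ ≤ (‖p‖ + cc) * Real.exp (2*K*(t - (k:ℝ)*τ)) :=
                  mul_le_mul_of_nonneg_left h7 h8.le
              have h10 : Real.exp (2*K*((k:ℝ)*τ)) * Real.exp (2*K*(t - (k:ℝ)*τ))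
                  = Real.exp (2*K*t) := by
                rw [← Real.exp_add]
                congr 1
                ring
              have h11 : (0:ℝ) < Real.exp (2*K*(t - (k:ℝ)*τ)) := Real.exp_pos _
              calc ‖g t‖ + cc ≤ (‖p‖ + cc) * Real.exp (2*K*(t - (k:ℝ)*τ)) := h9
              _ ≤ ((‖y‖ + cc) * Real.exp (2*K*((k:ℝ)*τ))) * Real.exp (2*K*(t - (k:ℝ)*τ)) := by
                    nlinarith
              _ = (‖y‖ + cc) * Real.exp (2*K*t) := by rw [mul_assoc, h10]
  -- choose enough steps
  set N := Nat.ceil (c'/τ) with hN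
  have hNτ : c' ≤ (N:ℝ)*τ := by
    have h1 : c'/τ ≤ (N:ℝ) := Nat.le_ceil _
    rw [div_le_iff₀ hτ] at h1
    linarith
  obtain ⟨f, hfc, hf0, hfp⟩ := main N
  refine ⟨f, hfc, hf0, ?_⟩
  intro t ht
  have : t ∈ Set.Icc (0:ℝ) (min ((N:ℝ)*τ) c') := by
    rw [min_eq_right hNτ]
    exact ht
  exact (hfp t this).1


lemma chainbound {w : ℝ → E → E} {K : ℝ} (hK : 0 < K)
    (hwlip : ∀ s : ℝ, ∀ x x' : E, 0 < ‖x - x'‖ → ‖x - x'‖ ≤ 1 →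
        ‖w s x - w s x'‖ ≤ K * ‖x - x'‖ * (1 - Real.log ‖x - x'‖)) :
    ∀ s : ℝ, ∀ x x' : E, ‖w s x - w s x'‖ ≤ 2*K*(‖x - x'‖ + 1) := by
  have hsmall : ∀ s : ℝ, ∀ x x' : E, ‖x - x'‖ ≤ 1 → ‖w s x - w s x'‖ ≤ 2*K := by
    intro s x x' hr
    rcases eq_or_lt_of_le (norm_nonneg (x - x')) with h | h
    · have hz : x - x' = 0 := norm_eq_zero.mp h.symm
      have : x = x' := sub_eq_zero.mp hz
      rw [this, sub_self, norm_zero]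
      positivity
    · have h1 := hwlip s x x' h hr
      have h2 := om_le (r := ‖x - x'‖) hK.le (norm_nonneg _) hr
      simp only [om] at h2
      linarith
  have main : ∀ n : ℕ, ∀ s : ℝ, ∀ x x' : E, ‖x - x'‖ ≤ n + 1 →
      ‖w s x - w s x'‖ ≤ 2*K*(n+1) := by
    intro n
    induction n with
    | zero =>
      intro s x x' h
      simp only [Nat.cast_zero, zero_add] at h ⊢
      have := hsmall s x x' h
      linarith
    | succ n ih =>
      intro s x x' h
      by_cases hr : ‖x - x'‖ ≤ n + 1
      · have := ih s x x' hr
        push_cast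
        have hge : (0:ℝ) ≤ 2*K := by positivity
        push_cast at this
        nlinarith
      · push_neg at hr
        have hrpos : (0:ℝ) < ‖x - x'‖ := lt_of_le_of_lt (by positivity) hr
        set r := ‖x - x'‖ with hrdef
        set z := x' + (1/r) • (x - x') with hz
        have hzx' : ‖z - x'‖ = 1 := by
          rw [hz]
          rw [show x' + (1/r) • (x - x') - x' = (1/r) • (x - x') by abel]
          rw [norm_smul]
          simp only [norm_div, norm_one, Real.norm_eq_abs]
          rw [abs_of_pos hrpos]
          field_simp
          exact hrdef.symm
        have hxz : ‖x - z‖ = r - 1 := by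
          rw [hz]
          have : x - (x' + (1/r) • (x - x')) = (1 - 1/r) • (x - x') := by
            rw [sub_smul, one_smul]
            abel
          rw [this, norm_smul, Real.norm_eq_abs]
          rw [abs_of_nonneg (by rw [sub_nonneg, div_le_one hrpos]; nlinarith : (0:ℝ) ≤ 1 - 1/r)]
          field_simp
          rw [← hrdef]; ring
        have h1 : ‖w s x - w s z‖ ≤ 2*K*(n+1) := by
          apply ih
          rw [hxz]
          push_cast at h ⊢
          linarith
        have h2 : ‖w s z - w s x'‖ ≤ 2*K := by
          apply hsmall
          rw [hzx']
        calc ‖w s x - w s x'‖ = ‖(w s x - w s z) + (w s z - w s x')‖ := by abel_nf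
        _ ≤ ‖w s x - w s z‖ + ‖w s z - w s x'‖ := norm_add_le _ _
        _ ≤ 2*K*(n+1) + 2*K := by linarith
        _ = 2*K*((n:ℝ)+1+1) := by ring
        _ = 2*K*(((n+1:ℕ):ℝ)+1) := by push_cast; ring
  intro s x x'
  have h0 : (0:ℝ) ≤ ‖x - x'‖ := norm_nonneg _
  have h1 : ‖x - x'‖ ≤ (Nat.floor ‖x - x'‖ : ℝ) + 1 := (Nat.lt_floor_add_one _).le
  have h2 := main (Nat.floor ‖x - x'‖) s x x' h1
  have h3 : ((Nat.floor ‖x - x'‖ : ℕ) : ℝ) ≤ ‖x - x'‖ := Nat.floor_le h0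
  nlinarith


end Stmt16

open Stmt16 Set MeasureTheory Filter in
set_option maxHeartbeats 1600000 in
/-- Osgood-type flow of a log-Lipschitz vector field: unique solvability of
`ẋ = u(x,t)`, `x(0) = y` on `[0,T]`, and Hölder continuity of the flow map with
exponent `α(t) = e^{-Lt}`. -/
theorem stmt_16 (T L : ℝ) (hT : 0 < T) (hL : 0 < L)
    (u : ℝ → EuclideanSpace ℝ (Fin 3) → EuclideanSpace ℝ (Fin 3))
    (hcont : Continuous fun p : ℝ × EuclideanSpace ℝ (Fin 3) => u p.1 p.2)
    (hlip : ∀ t ∈ Set.Icc (0 : ℝ) T, ∀ x y : EuclideanSpace ℝ (Fin 3),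
      0 < ‖x - y‖ → ‖x - y‖ ≤ 1 →
      ‖u t x - u t y‖ ≤ L * ‖x - y‖ * (1 + |Real.log ‖x - y‖|)) :
    ∃ flow : ℝ → EuclideanSpace ℝ (Fin 3) → EuclideanSpace ℝ (Fin 3),
      (∀ y, flow 0 y = y) ∧
      (∀ y, ∀ t ∈ Set.Icc (0 : ℝ) T,
        HasDerivAt (fun s => flow s y) (u t (flow t y)) t) ∧
      (∀ (y : EuclideanSpace ℝ (Fin 3)) (g : ℝ → EuclideanSpace ℝ (Fin 3)),
        g 0 = y → (∀ t ∈ Set.Icc (0 : ℝ) T, HasDerivAt g (u t (g t)) t) →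
        ∀ t ∈ Set.Icc (0 : ℝ) T, g t = flow t y) ∧
      ∃ C > (0 : ℝ), ∀ t ∈ Set.Icc (0 : ℝ) T, ∀ y z : EuclideanSpace ℝ (Fin 3),
        ‖y - z‖ ≤ 1 →
        ‖flow t y - flow t z‖ ≤ C * ‖y - z‖ ^ (Real.exp (-L * t)) := by
  classical
  have hclampmem : ∀ t : ℝ, max 0 (min t T) ∈ Set.Icc (0:ℝ) T :=
    fun t => ⟨le_max_left _ _, max_le hT.le (min_le_right _ _)⟩
  set v : ℝ → EuclideanSpace ℝ (Fin 3) → EuclideanSpace ℝ (Fin 3) :=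
    fun t x => u (max 0 (min t T)) x with hv
  have hveq : ∀ t ∈ Set.Icc (0:ℝ) T, ∀ x, v t x = u t x := by
    intro t ht x
    simp only [hv]
    rw [min_eq_left ht.2, max_eq_right ht.1]
  have hvc : Continuous fun q : ℝ × EuclideanSpace ℝ (Fin 3) => v q.1 q.2 :=
    hcont.comp ((continuous_const.max (continuous_fst.min continuous_const)).prodMk
      continuous_snd)
  have hvlip : ∀ s : ℝ, ∀ x x' : EuclideanSpace ℝ (Fin 3), 0 < ‖x - x'‖ → ‖x - x'‖ ≤ 1 →
      ‖v s x - v s x'‖ ≤ L * ‖x - x'‖ * (1 - Real.log ‖x - x'‖) := by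
    intro s x x' h0 h1
    have h2 := hlip _ (hclampmem s) x x' h0 h1
    have h3 : |Real.log ‖x - x'‖| = -Real.log ‖x - x'‖ :=
      abs_of_nonpos (Real.log_nonpos (norm_nonneg _) h1)
    rw [h3] at h2
    calc ‖v s x - v s x'‖ ≤ L * ‖x - x'‖ * (1 + -Real.log ‖x - x'‖) := h2
    _ = L * ‖x - x'‖ * (1 - Real.log ‖x - x'‖) := by ring
  have hucont0 : ContinuousOn (fun t => u t 0) (Set.Icc (0:ℝ) T) :=
    (hcont.comp (continuous_id.prodMk continuous_const)).continuousOn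
  obtain ⟨M₁, hM₁⟩ := isCompact_Icc.exists_bound_of_continuousOn hucont0
  set M₀ := max M₁ 0 with hM₀def
  have hM₀ : 0 ≤ M₀ := le_max_right _ _
  have hvM : ∀ s : ℝ, ‖v s 0‖ ≤ M₀ :=
    fun s => le_trans (hM₁ _ (hclampmem s)) (le_max_left _ _)
  have hvchain := chainbound hL hvlip
  set vB : ℝ → EuclideanSpace ℝ (Fin 3) → EuclideanSpace ℝ (Fin 3) :=
    fun s x => -(v (-s) x) with hvB
  have hvBc : Continuous fun q : ℝ × EuclideanSpace ℝ (Fin 3) => vB q.1 q.2 :=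
    (hvc.comp ((continuous_fst.neg).prodMk continuous_snd)).neg
  have hvBdiff : ∀ s : ℝ, ∀ x x' : EuclideanSpace ℝ (Fin 3),
      vB s x - vB s x' = -(v (-s) x - v (-s) x') := by
    intro s x x'
    simp only [hvB]
    abel
  have hvBlip : ∀ s : ℝ, ∀ x x' : EuclideanSpace ℝ (Fin 3), 0 < ‖x - x'‖ → ‖x - x'‖ ≤ 1 →
      ‖vB s x - vB s x'‖ ≤ L * ‖x - x'‖ * (1 - Real.log ‖x - x'‖) := by
    intro s x x' h0 h1
    rw [hvBdiff, norm_neg]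
    exact hvlip (-s) x x' h0 h1
  have hvBM : ∀ s : ℝ, ‖vB s 0‖ ≤ M₀ := by
    intro s
    show ‖-(v (-s) 0)‖ ≤ M₀
    rw [norm_neg]
    exact hvM (-s)
  have hvBchain : ∀ s : ℝ, ∀ x x' : EuclideanSpace ℝ (Fin 3),
      ‖vB s x - vB s x'‖ ≤ 2*L*(‖x - x'‖ + 1) := by
    intro s x x'
    rw [hvBdiff, norm_neg]
    exact hvchain (-s) x x'
  have hT1 : (0:ℝ) < T + 1 := by linarith
  choose F hFc hF0 hFeq using fun y : EuclideanSpace ℝ (Fin 3) =>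
    exist (c' := T+1) hL hM₀ hT1 hvc hvlip hvM hvchain y
  choose G hGc hG0 hGeq using fun y : EuclideanSpace ℝ (Fin 3) =>
    exist (c' := 1) hL hM₀ one_pos hvBc hvBlip hvBM hvBchain y
  -- the combined curve
  have hcurvec : ∀ y, Continuous fun t : ℝ => if 0 ≤ t then F y t else G y (-t) := by
    intro y
    apply Continuous.if_le (hFc y) ((hGc y).comp continuous_neg)
      continuous_const continuous_id
    intro t ht'
    have ht'' : (0:ℝ) = t := ht'
    rw [← ht'', hF0 y]
    show y = G y (-0)
    rw [neg_zero, hG0 y]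
  have hic : ∀ y, Continuous fun s : ℝ => v s (if 0 ≤ s then F y s else G y (-s)) :=
    fun y => hvc.comp (continuous_id.prodMk (hcurvec y))
  -- the combined integral equation on [-1, T+1]
  have hkey : ∀ y, ∀ t ∈ Set.Icc (-1:ℝ) (T+1),
      (if 0 ≤ t then F y t else G y (-t))
        = y + ∫ s in (0:ℝ)..t, v s (if 0 ≤ s then F y s else G y (-s)) := by
    intro y t ht
    by_cases h0t : 0 ≤ t
    · rw [if_pos h0t]
      rw [hFeq y t ⟨h0t, ht.2⟩]
      congr 1
      apply intervalIntegral.integral_congr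
      intro s hs
      rw [Set.uIcc_of_le h0t] at hs
      show v s (F y s) = v s (if 0 ≤ s then F y s else G y (-s))
      rw [if_pos hs.1]
    · push_neg at h0t
      rw [if_neg (not_le.2 h0t)]
      have hnt : -t ∈ Set.Icc (0:ℝ) 1 := ⟨by linarith, by linarith [ht.1]⟩
      have hG := hGeq y (-t) hnt
      have hcongr : (∫ s in (0:ℝ)..t, v s (if 0 ≤ s then F y s else G y (-s)))
          = ∫ s in (0:ℝ)..t, v s (G y (-s)) := by
        apply intervalIntegral.integral_congr
        intro s hs
        rw [Set.uIcc_of_ge h0t.le] at hs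
        show v s (if 0 ≤ s then F y s else G y (-s)) = v s (G y (-s))
        rcases lt_or_eq_of_le hs.2 with h | h
        · rw [if_neg (not_le.2 h)]
        · rw [h, if_pos le_rfl, hF0 y, neg_zero, hG0 y]
      have hneg : (∫ s in (0:ℝ)..t, v s (G y (-s)))
          = -(∫ s in (0:ℝ)..t, vB (-s) (G y (-s))) := by
        rw [← intervalIntegral.integral_neg]
        apply intervalIntegral.integral_congr
        intro s _
        show v s (G y (-s)) = -(vB (-s) (G y (-s)))
        simp only [hvB, neg_neg]
      have hcomp : (∫ s in (0:ℝ)..t, vB (-s) (G y (-s)))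
          = ∫ s in (-t)..(0:ℝ), vB s (G y s) := by
        have h5 := intervalIntegral.integral_comp_neg (a := (0:ℝ)) (b := t)
          (fun s => vB s (G y s))
        simpa using h5
      have hflip : (∫ s in (-t)..(0:ℝ), vB s (G y s))
          = -(∫ s in (0:ℝ)..(-t), vB s (G y s)) :=
        intervalIntegral.integral_symm _ _
      rw [hcongr, hneg, hcomp, hflip, neg_neg, hG]
  -- derivative of the combined curve
  have hflowd : ∀ y, ∀ t ∈ Set.Icc (0:ℝ) T,
      HasDerivAt (fun s : ℝ => if 0 ≤ s then F y s else G y (-s))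
        (v t (if 0 ≤ t then F y t else G y (-t))) t := by
    intro y t ht
    have hP : HasDerivAt
        (fun r : ℝ => y + ∫ s in (0:ℝ)..r, v s (if 0 ≤ s then F y s else G y (-s)))
        (v t (if 0 ≤ t then F y t else G y (-t))) t := by
      apply HasDerivAt.const_add
      exact intervalIntegral.integral_hasDerivAt_right ((hic y).intervalIntegrable 0 t)
        ((hic y).stronglyMeasurableAtFilter volume (nhds t)) (hic y).continuousAt
    apply hP.congr_of_eventuallyEq
    have hmem : Set.Ioo (-1:ℝ) (T+1) ∈ nhds t :=
      Ioo_mem_nhds (by linarith [ht.1]) (by linarith [ht.2])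
    filter_upwards [hmem] with s hs
    exact hkey y s ⟨hs.1.le, hs.2.le⟩
  -- integral equation for F in terms of u on [0,T]
  have hfloweq : ∀ y, ∀ t ∈ Set.Icc (0:ℝ) T,
      F y t = y + ∫ s in (0:ℝ)..t, u s (F y s) := by
    intro y t ht
    rw [hFeq y t ⟨ht.1, by linarith [ht.2]⟩]
    congr 1
    apply intervalIntegral.integral_congr
    intro s hs
    rw [Set.uIcc_of_le ht.1] at hs
    show v s (F y s) = u s (F y s)
    exact hveq s ⟨hs.1, le_trans hs.2 ht.2⟩ (F y s)
  refine ⟨fun t y => if 0 ≤ t then F y t else G y (-t), ?_, ?_, ?_, ?_⟩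
  · intro y
    show (if (0:ℝ) ≤ 0 then F y 0 else G y (-0)) = y
    rw [if_pos le_rfl]
    exact hF0 y
  · intro y t ht
    have h1 := hflowd y t ht
    have h2 : v t (if 0 ≤ t then F y t else G y (-t))
        = u t (if 0 ≤ t then F y t else G y (-t)) := hveq t ht _
    rw [h2] at h1
    exact h1
  · -- uniqueness
    intro y g hg0 hgd t ht
    have hgc : ContinuousOn g (Set.Icc (0:ℝ) T) :=
      fun s hs => ((hgd s hs).continuousAt).continuousWithinAt
    have hgeq : ∀ t' ∈ Set.Icc (0:ℝ) T, g t' = y + ∫ s in (0:ℝ)..t', u s (g s) := by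
      intro t' ht'
      have hsub : Set.uIcc (0:ℝ) t' ⊆ Set.Icc (0:ℝ) T := by
        rw [Set.uIcc_of_le ht'.1]
        exact fun s hs => ⟨hs.1, le_trans hs.2 ht'.2⟩
      have hint : IntervalIntegrable (fun s => u s (g s)) volume 0 t' := by
        apply ContinuousOn.intervalIntegrable
        exact hcont.comp_continuousOn (continuousOn_id.prodMk (hgc.mono hsub))
      have h2 := intervalIntegral.integral_eq_sub_of_hasDerivAt
        (f := g) (f' := fun s => u s (g s)) (fun s hs => hgd s (hsub hs)) hint
      rw [hg0] at h2
      rw [h2]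
      abel
    have hFcon : ContinuousOn (F y) (Set.Icc (0:ℝ) T) := (hFc y).continuousOn
    have hdc : ContinuousOn (fun s => ‖g s - F y s‖) (Set.Icc (0:ℝ) T) :=
      (hgc.sub hFcon).norm
    have hd0 : ‖g 0 - F y 0‖ = 0 := by
      rw [hg0, hF0 y, sub_self, norm_zero]
    have hdineq : ∀ t' ∈ Set.Icc (0:ℝ) T,
        (∀ s ∈ Set.Icc (0:ℝ) t', ‖g s - F y s‖ ≤ 1) →
        ‖g t' - F y t'‖ ≤ ∫ s in (0:ℝ)..t',
          L * ‖g s - F y s‖ * (1 - Real.log ‖g s - F y s‖) := by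
      intro t' ht' hcond
      have hsub : Set.Icc (0:ℝ) t' ⊆ Set.Icc (0:ℝ) T :=
        fun s hs => ⟨hs.1, le_trans hs.2 ht'.2⟩
      have huIcc : Set.uIcc (0:ℝ) t' = Set.Icc (0:ℝ) t' := Set.uIcc_of_le ht'.1
      have hc1 : ContinuousOn (fun s => u s (g s)) (Set.Icc (0:ℝ) t') :=
        hcont.comp_continuousOn (continuousOn_id.prodMk (hgc.mono hsub))
      have hc2 : ContinuousOn (fun s => u s (F y s)) (Set.Icc (0:ℝ) t') :=
        hcont.comp_continuousOn (continuousOn_id.prodMk (hFcon.mono hsub))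
      have hint1 : IntervalIntegrable (fun s => u s (g s)) volume 0 t' := by
        apply ContinuousOn.intervalIntegrable
        rwa [huIcc]
      have hint2 : IntervalIntegrable (fun s => u s (F y s)) volume 0 t' := by
        apply ContinuousOn.intervalIntegrable
        rwa [huIcc]
      have hd : g t' - F y t' = ∫ s in (0:ℝ)..t', (u s (g s) - u s (F y s)) := by
        rw [intervalIntegral.integral_sub hint1 hint2]
        have e1 : (∫ s in (0:ℝ)..t', u s (g s)) = g t' - y := by
          rw [hgeq t' ht']
          abel
        have e2 : (∫ s in (0:ℝ)..t', u s (F y s)) = F y t' - y := by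
          rw [hfloweq y t' ht']
          abel
        rw [e1, e2]
        abel
      have hnorm : ‖g t' - F y t'‖ ≤ ∫ s in (0:ℝ)..t', ‖u s (g s) - u s (F y s)‖ := by
        rw [hd]
        exact intervalIntegral.norm_integral_le_integral_norm ht'.1
      have hdm : AEMeasurable (fun s => ‖g s - F y s‖) (volume.restrict (Set.Ioc (0:ℝ) t')) := by
        have h1 : AEMeasurable (fun s => ‖g s - F y s‖) (volume.restrict (Set.Icc (0:ℝ) t')) :=
          ((hdc.mono hsub)).aemeasurable measurableSet_Icc
        exact h1.mono_measure (Measure.restrict_mono Set.Ioc_subset_Icc_self le_rfl)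
      have hint3 : IntervalIntegrable
          (fun s => L * ‖g s - F y s‖ * (1 - Real.log ‖g s - F y s‖)) volume 0 t' := by
        apply intInt_of_bdd (M := 2*L) ht'.1
        · exact ((aemeasurable_const.mul hdm).mul
            (aemeasurable_const.sub
              (Real.measurable_log.comp_aemeasurable hdm))).aestronglyMeasurable
        · intro s hs
          have hs' : s ∈ Set.Icc (0:ℝ) t' := Set.Ioc_subset_Icc_self hs
          change |L * ‖g s - F y s‖ * (1 - Real.log ‖g s - F y s‖)| ≤ 2*L
          have e1 := om_nonneg hL.le (norm_nonneg (g s - F y s)) (hcond s hs')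
          have e2 := om_le hL.le (norm_nonneg (g s - F y s)) (hcond s hs')
          simp only [om] at e1 e2
          rw [abs_of_nonneg e1]
          exact e2
      have hfinal : (∫ s in (0:ℝ)..t', ‖u s (g s) - u s (F y s)‖)
          ≤ ∫ s in (0:ℝ)..t', L * ‖g s - F y s‖ * (1 - Real.log ‖g s - F y s‖) := by
        apply intervalIntegral.integral_mono_on ht'.1 ?_ hint3
        · intro s hs
          have hsT : s ∈ Set.Icc (0:ℝ) T := hsub hs
          rcases eq_or_lt_of_le (norm_nonneg (g s - F y s)) with h | h
          · have hgs : g s = F y s := sub_eq_zero.mp (norm_eq_zero.mp h.symm)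
            show ‖u s (g s) - u s (F y s)‖ ≤ _
            have hzz : ‖u s (g s) - u s (F y s)‖ = 0 := by
              rw [hgs, sub_self, norm_zero]
            rw [hzz]
            have e1 := om_nonneg hL.le (norm_nonneg (g s - F y s)) (hcond s hs)
            simpa only [om] using e1
          · have h5 := hlip s hsT (g s) (F y s) h (hcond s hs)
            have h6 : |Real.log ‖g s - F y s‖| = -Real.log ‖g s - F y s‖ :=
              abs_of_nonpos (Real.log_nonpos (norm_nonneg _) (hcond s hs))
            rw [h6] at h5
            show ‖u s (g s) - u s (F y s)‖ ≤ _
            calc ‖u s (g s) - u s (F y s)‖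
                ≤ L * ‖g s - F y s‖ * (1 + -Real.log ‖g s - F y s‖) := h5
            _ = L * ‖g s - F y s‖ * (1 - Real.log ‖g s - F y s‖) := by ring
        · apply ContinuousOn.intervalIntegrable
          rw [huIcc]
          exact (hc1.sub hc2).norm
      exact le_trans hnorm hfinal
    have hzero := osgood_zero hL hT.le hdc (fun s _ => norm_nonneg _) hd0 hdineq t ht
    have hgt : g t = F y t := sub_eq_zero.mp (norm_eq_zero.mp hzero)
    show g t = if 0 ≤ t then F y t else G y (-t)
    rw [if_pos ht.1]
    exact hgt
  · -- Hölder continuity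
    set δ₁ := Real.exp (1 - Real.exp (L*T))/2 with hδ₁
    have hδ₁pos : 0 < δ₁ := by positivity
    have hδ₁le : δ₁ ≤ 1/2 := by
      rw [hδ₁]
      have h1 : (1:ℝ) ≤ Real.exp (L*T) := Real.one_le_exp (by positivity)
      have h2 : Real.exp (1 - Real.exp (L*T)) ≤ 1 :=
        Real.exp_le_one_iff.2 (by linarith)
      linarith
    have hCpos : (0:ℝ) < 2*Real.exp 1 + 3*Real.exp (2*L*T)/δ₁ := by positivity
    refine ⟨2*Real.exp 1 + 3*Real.exp (2*L*T)/δ₁, hCpos, ?_⟩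
    intro t ht y z hyz
    have hw0 : 0 < Real.exp (-L*t) := Real.exp_pos _
    have hw1 : Real.exp (-L*t) ≤ 1 :=
      Real.exp_le_one_iff.2 (by nlinarith [ht.1])
    show ‖(if 0 ≤ t then F y t else G y (-t)) - (if 0 ≤ t then F z t else G z (-t))‖ ≤ _
    rw [if_pos ht.1, if_pos ht.1]
    rcases eq_or_lt_of_le (norm_nonneg (y - z)) with h0 | h0
    · -- y = z
      have hyz' : y = z := sub_eq_zero.mp (norm_eq_zero.mp h0.symm)
      subst hyz'
      rw [sub_self, norm_zero, sub_self, norm_zero, Real.zero_rpow hw0.ne', mul_zero]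
    · -- the difference representation
      have hdc : ContinuousOn (fun s => ‖F y s - F z s‖) (Set.Icc (0:ℝ) T) :=
        ((hFc y).continuousOn.sub (hFc z).continuousOn).norm
      have hc1 : Continuous (fun s => u s (F y s)) :=
        hcont.comp (continuous_id.prodMk (hFc y))
      have hc2 : Continuous (fun s => u s (F z s)) :=
        hcont.comp (continuous_id.prodMk (hFc z))
      have hdrep : ∀ t' ∈ Set.Icc (0:ℝ) T, F y t' - F z t'
          = (y - z) + ∫ s in (0:ℝ)..t', (u s (F y s) - u s (F z s)) := by
        intro t' ht'
        rw [intervalIntegral.integral_sub (hc1.intervalIntegrable 0 t')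
          (hc2.intervalIntegrable 0 t')]
        have e1 : (∫ s in (0:ℝ)..t', u s (F y s)) = F y t' - y := by
          rw [hfloweq y t' ht']
          abel
        have e2 : (∫ s in (0:ℝ)..t', u s (F z s)) = F z t' - z := by
          rw [hfloweq z t' ht']
          abel
        rw [e1, e2]
        abel
      have hdnorm : ∀ t' ∈ Set.Icc (0:ℝ) T, ‖F y t' - F z t'‖
          ≤ ‖y - z‖ + ∫ s in (0:ℝ)..t', ‖u s (F y s) - u s (F z s)‖ := by
        intro t' ht'
        rw [hdrep t' ht']
        refine le_trans (norm_add_le _ _) ?_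
        exact add_le_add_right (intervalIntegral.norm_integral_le_integral_norm ht'.1) _
      by_cases hsm : ‖y - z‖ ≤ δ₁
      · -- small separation: Osgood comparison
        have hdineq : ∀ t' ∈ Set.Icc (0:ℝ) T,
            (∀ s ∈ Set.Icc (0:ℝ) t', ‖F y s - F z s‖ ≤ 1) →
            ‖F y t' - F z t'‖ ≤ ‖y - z‖ + ∫ s in (0:ℝ)..t',
              L * ‖F y s - F z s‖ * (1 - Real.log ‖F y s - F z s‖) := by
          intro t' ht' hcond
          have hsub : Set.Icc (0:ℝ) t' ⊆ Set.Icc (0:ℝ) T :=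
            fun s hs => ⟨hs.1, le_trans hs.2 ht'.2⟩
          refine le_trans (hdnorm t' ht') (add_le_add_right ?_ _)
          have hdm : AEMeasurable (fun s => ‖F y s - F z s‖)
              (volume.restrict (Set.Ioc (0:ℝ) t')) :=
            (((hFc y).sub (hFc z)).norm.measurable).aemeasurable
          have hint3 : IntervalIntegrable
              (fun s => L * ‖F y s - F z s‖ * (1 - Real.log ‖F y s - F z s‖)) volume 0 t' := by
            apply intInt_of_bdd (M := 2*L) ht'.1
            · exact ((aemeasurable_const.mul hdm).mul
                (aemeasurable_const.sub
                  (Real.measurable_log.comp_aemeasurable hdm))).aestronglyMeasurable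
            · intro s hs
              have hs' : s ∈ Set.Icc (0:ℝ) t' := Set.Ioc_subset_Icc_self hs
              change |L * ‖F y s - F z s‖ * (1 - Real.log ‖F y s - F z s‖)| ≤ 2*L
              have e1 := om_nonneg hL.le (norm_nonneg (F y s - F z s)) (hcond s hs')
              have e2 := om_le hL.le (norm_nonneg (F y s - F z s)) (hcond s hs')
              simp only [om] at e1 e2
              rw [abs_of_nonneg e1]
              exact e2
          apply intervalIntegral.integral_mono_on ht'.1 ?_ hint3
          · intro s hs
            have hsT : s ∈ Set.Icc (0:ℝ) T := hsub hs
            rcases eq_or_lt_of_le (norm_nonneg (F y s - F z s)) with h | h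
            · have hgs : F y s = F z s := sub_eq_zero.mp (norm_eq_zero.mp h.symm)
              show ‖u s (F y s) - u s (F z s)‖ ≤ _
              have hzz : ‖u s (F y s) - u s (F z s)‖ = 0 := by
                rw [hgs, sub_self, norm_zero]
              rw [hzz]
              have e1 := om_nonneg hL.le (norm_nonneg (F y s - F z s)) (hcond s hs)
              simpa only [om] using e1
            · have h5 := hlip s hsT (F y s) (F z s) h (hcond s hs)
              have h6 : |Real.log ‖F y s - F z s‖| = -Real.log ‖F y s - F z s‖ :=
                abs_of_nonpos (Real.log_nonpos (norm_nonneg _) (hcond s hs))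
              rw [h6] at h5
              show ‖u s (F y s) - u s (F z s)‖ ≤ _
              calc ‖u s (F y s) - u s (F z s)‖
                  ≤ L * ‖F y s - F z s‖ * (1 + -Real.log ‖F y s - F z s‖) := h5
              _ = L * ‖F y s - F z s‖ * (1 - Real.log ‖F y s - F z s‖) := by ring
          · apply ContinuousOn.intervalIntegrable
            rw [Set.uIcc_of_le ht'.1]
            exact (hc1.continuousOn.sub hc2.continuousOn).norm
        have hfa : ‖F y 0 - F z 0‖ ≤ ‖y - z‖ := by
          rw [hF0 y, hF0 z]
        have hsmall : Real.log (2*‖y - z‖) ≤ 1 - Real.exp (L*(T-0)) := by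
          have h1 : 2*‖y - z‖ ≤ Real.exp (1 - Real.exp (L*T)) := by
            rw [hδ₁] at hsm
            linarith
          calc Real.log (2*‖y - z‖) ≤ Real.log (Real.exp (1 - Real.exp (L*T))) :=
            Real.log_le_log (by linarith) h1
          _ = 1 - Real.exp (L*(T-0)) := by rw [Real.log_exp]; norm_num
        have hos := osgood (K := L) (a := 0) (c := T) (η := ‖y - z‖) hL h0 hT.le
          hdc (fun s _ => norm_nonneg _) hfa hsmall hdineq t ht
        have hexp : Real.exp (-L*(t-0)) = Real.exp (-L*t) := by norm_num
        rw [hexp] at hos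
        have hmul : (2*‖y - z‖) ^ Real.exp (-L*t)
            = 2 ^ Real.exp (-L*t) * ‖y - z‖ ^ Real.exp (-L*t) :=
          Real.mul_rpow (by norm_num) (norm_nonneg _)
        have h2w : (2:ℝ) ^ Real.exp (-L*t) ≤ 2 := by
          have := Real.rpow_le_rpow_of_exponent_le (by norm_num : (1:ℝ) ≤ 2) hw1
          rwa [Real.rpow_one] at this
        have hrp : (0:ℝ) ≤ ‖y - z‖ ^ Real.exp (-L*t) := Real.rpow_nonneg (norm_nonneg _) _
        calc ‖F y t - F z t‖ ≤ Real.exp 1 * (2*‖y - z‖) ^ Real.exp (-L*t) := hos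
        _ = Real.exp 1 * (2 ^ Real.exp (-L*t) * ‖y - z‖ ^ Real.exp (-L*t)) := by rw [hmul]
        _ ≤ Real.exp 1 * (2 * ‖y - z‖ ^ Real.exp (-L*t)) := by
              apply mul_le_mul_of_nonneg_left _ (Real.exp_pos 1).le
              exact mul_le_mul_of_nonneg_right h2w hrp
        _ = (2*Real.exp 1) * ‖y - z‖ ^ Real.exp (-L*t) := by ring
        _ ≤ (2*Real.exp 1 + 3*Real.exp (2*L*T)/δ₁) * ‖y - z‖ ^ Real.exp (-L*t) := by
              apply mul_le_mul_of_nonneg_right _ hrp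
              have : (0:ℝ) ≤ 3*Real.exp (2*L*T)/δ₁ := by positivity
              linarith
      · -- large separation: crude Gronwall bound
        push_neg at hsm
        have hgineq : ∀ t' ∈ Set.Icc (0:ℝ) T, ‖F y t' - F z t'‖
            ≤ ‖y - z‖ + ∫ s in (0:ℝ)..t', (2*L) * (‖F y s - F z s‖ + 1) := by
          intro t' ht'
          have hsub : Set.Icc (0:ℝ) t' ⊆ Set.Icc (0:ℝ) T :=
            fun s hs => ⟨hs.1, le_trans hs.2 ht'.2⟩
          refine le_trans (hdnorm t' ht') (add_le_add_right ?_ _)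
          apply intervalIntegral.integral_mono_on ht'.1
          · apply ContinuousOn.intervalIntegrable
            rw [Set.uIcc_of_le ht'.1]
            exact (hc1.continuousOn.sub hc2.continuousOn).norm
          · apply ContinuousOn.intervalIntegrable
            rw [Set.uIcc_of_le ht'.1]
            exact continuous_const.continuousOn.mul
              ((((hFc y).sub (hFc z)).norm.continuousOn).add continuous_const.continuousOn)
          · intro s hs
            have hsT : s ∈ Set.Icc (0:ℝ) T := hsub hs
            have h5 := hvchain s (F y s) (F z s)
            rw [hveq s hsT (F y s), hveq s hsT (F z s)] at h5
            calc ‖u s (F y s) - u s (F z s)‖ ≤ 2*L*(‖F y s - F z s‖ + 1) := h5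
            _ = (2*L) * (‖F y s - F z s‖ + 1) := by ring
        have hgr := gron (a := 0) (c := T) (A := ‖y - z‖) (M := 2*L) hT.le
          (norm_nonneg _) (by positivity) hdc hgineq t ht
        have hbig : ‖F y t - F z t‖ ≤ 3*Real.exp (2*L*T) := by
          have h7 : Real.exp (2*L*(T-0)) = Real.exp (2*L*T) := by norm_num
          rw [h7] at hgr
          have h8 : (0:ℝ) < Real.exp (2*L*T) := Real.exp_pos _
          nlinarith
        have hrp1 : δ₁ ≤ ‖y - z‖ ^ Real.exp (-L*t) := by
          have h9 : δ₁ ^ Real.exp (-L*t) ≤ ‖y - z‖ ^ Real.exp (-L*t) :=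
            Real.rpow_le_rpow hδ₁pos.le hsm.le hw0.le
          have h10 : δ₁ ^ (1:ℝ) ≤ δ₁ ^ Real.exp (-L*t) :=
            Real.rpow_le_rpow_of_exponent_ge hδ₁pos (by linarith) hw1
          rw [Real.rpow_one] at h10
          linarith
        have h11 : (3*Real.exp (2*L*T)/δ₁) * δ₁ = 3*Real.exp (2*L*T) := by
          field_simp
        have hrp : (0:ℝ) ≤ ‖y - z‖ ^ Real.exp (-L*t) := Real.rpow_nonneg (norm_nonneg _) _
        have h12 : (0:ℝ) ≤ 3*Real.exp (2*L*T)/δ₁ := by positivity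
        calc ‖F y t - F z t‖ ≤ 3*Real.exp (2*L*T) := hbig
        _ = (3*Real.exp (2*L*T)/δ₁) * δ₁ := h11.symm
        _ ≤ (3*Real.exp (2*L*T)/δ₁) * ‖y - z‖ ^ Real.exp (-L*t) :=
              mul_le_mul_of_nonneg_left hrp1 h12
        _ ≤ (2*Real.exp 1 + 3*Real.exp (2*L*T)/δ₁) * ‖y - z‖ ^ Real.exp (-L*t) := by
              apply mul_le_mul_of_nonneg_right _ hrp
              have : (0:ℝ) ≤ 2*Real.exp 1 := by positivity
              linarith
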